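/- arXiv:1704.07726 — 3 statements merged into one kernel-verified Lean document; each statement's English description precedes it below -/
import Mathlib

section
/- Let b ∈ ℂⁿ, let f be a holomorphic function on the open polydisc PΔ(b;r) ⊆ ℂⁿ, and let 1 ≤ q ≤ n. Then there exist holomorphic functions h₁, …, h_q on PΔ(b;r) and a holomorphic function g on the polydisc {(z_{q+1}, …, z_n) : |z_j − b_j| < r_j for q+1 ≤ j ≤ n} such that f(z) = Σ_{j=1}^q (z_j − b_j)·h_j(z) + g(z_{q+1}, …, z_n) for all z ∈ PΔ(b;r). -/
open Set Metric MeasureTheory Function Complex intervalIntegral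

noncomputable section Stmt1Aux
variable {n : ℕ}

def Ej (j : Fin n) : (Fin n → ℂ) →L[ℂ] (Fin n → ℂ) :=
  ContinuousLinearMap.id ℂ _ - (ContinuousLinearMap.proj j).smulRight (Pi.single j 1)

lemma update_eq_affine (j : Fin n) (x : Fin n → ℂ) (a : ℂ) :
    Function.update x j a = Ej j x + a • (Pi.single j 1 : Fin n → ℂ) := by
  funext i
  rcases eq_or_ne i j with rfl | hij
  · simp [Ej, Function.update_self, Pi.single_apply]
  · simp [Ej, Function.update_of_ne hij, Pi.single_apply, hij]

lemma hasFDerivAt_update_const (j : Fin n) (a : ℂ) (x : Fin n → ℂ) :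
    HasFDerivAt (fun y => Function.update y j a) (Ej j) x := by
  have : (fun y : Fin n → ℂ => Function.update y j a)
      = fun y => Ej j y + a • (Pi.single j 1 : Fin n → ℂ) := funext fun y => update_eq_affine j y a
  rw [this]
  exact ((Ej j).hasFDerivAt).add_const _

lemma continuous_update_right (j : Fin n) (x : Fin n → ℂ) :
    Continuous fun a : ℂ => Function.update x j a := by
  have : (fun a : ℂ => Function.update x j a)
      = fun a => Ej j x + a • (Pi.single j 1 : Fin n → ℂ) := funext fun a => update_eq_affine j x a
  rw [this]
  exact continuous_const.add (continuous_id.smul continuous_const)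

lemma continuous_update2 (j : Fin n) :
    Continuous fun p : (Fin n → ℂ) × ℂ => Function.update p.1 j p.2 := by
  have : (fun p : (Fin n → ℂ) × ℂ => Function.update p.1 j p.2)
      = fun p => Ej j p.1 + p.2 • (Pi.single j 1 : Fin n → ℂ) :=
    funext fun p => update_eq_affine j p.1 p.2
  rw [this]
  exact ((Ej j).continuous.comp continuous_fst).add (continuous_snd.smul continuous_const)

set_option maxHeartbeats 2000000 in
set_option synthInstance.maxHeartbeats 1000000 in
/-- Division of a holomorphic function on a polydisc by `z j - b j`. -/
lemma keyDiv (b : Fin n → ℂ) (r : Fin n → ℝ) (hr : ∀ j, 0 < r j) (j : Fin n)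
    (G : (Fin n → ℂ) → ℂ)
    (hG : DifferentiableOn ℂ G {z | ∀ i, ‖z i - b i‖ < r i}) :
    ∃ h : (Fin n → ℂ) → ℂ,
      DifferentiableOn ℂ h {z | ∀ i, ‖z i - b i‖ < r i} ∧
      ∀ z ∈ {z : Fin n → ℂ | ∀ i, ‖z i - b i‖ < r i},
        G z = G (Function.update z j (b j)) + (z j - b j) * h z := by
  set U : Set (Fin n → ℂ) := {z | ∀ i, ‖z i - b i‖ < r i} with hU
  have hUopen : IsOpen U := by
    have : U = ⋂ i, (fun z : Fin n → ℂ => z i) ⁻¹' Metric.ball (b i) (r i) := by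
      ext z; simp [hU, Complex.dist_eq, Metric.mem_ball]
    rw [this]
    exact isOpen_iInter_of_finite fun i =>
      (isOpen_ball).preimage (continuous_apply i)
  -- the division function
  set h : (Fin n → ℂ) → ℂ :=
    fun z => dslope (fun w => G (Function.update z j w)) (b j) (z j) with hh
  refine ⟨h, ?_, ?_⟩
  · -- differentiability : the hard part
    intro z₀ hz₀
    obtain ⟨ε₀, hε₀, hball⟩ := Metric.isOpen_iff.1 hUopen z₀ hz₀
    set A := ‖z₀ j - b j‖ with hAdef
    have hA0 : 0 ≤ A := norm_nonneg _
    have hAr : A < r j := hz₀ j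
    set ρ := (A + r j) / 2 with hρdef
    have hAρ : A < ρ := by simp only [hρdef]; linarith
    have hρr : ρ < r j := by simp only [hρdef]; linarith
    have hρ0 : 0 < ρ := lt_of_le_of_lt hA0 hAρ
    have hδex : 0 < min (ε₀ / 2) (min ((ρ - A) / 4) ((r j - ρ) / 4)) := by
      simp only [lt_min_iff]; exact ⟨by linarith, by linarith, by linarith⟩
    set δ := min (ε₀ / 2) (min ((ρ - A) / 4) ((r j - ρ) / 4)) with hδdef
    have hδ0 : 0 < δ := hδex
    have hδε : δ < ε₀ := lt_of_le_of_lt (min_le_left _ _) (by linarith)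
    have hδA : A + 4 * δ ≤ ρ := by
      have h1 : δ ≤ (ρ - A) / 4 := le_trans (min_le_right _ _) (min_le_left _ _)
      linarith
    have hδρr : ρ + δ < r j := by
      have h1 : δ ≤ (r j - ρ) / 4 := le_trans (min_le_right _ _) (min_le_right _ _)
      linarith
    have hδball : closedBall z₀ δ ⊆ U := fun x hx =>
      hball (lt_of_le_of_lt (mem_closedBall.1 hx) hδε)
    have hball3 : ball z₀ (δ / 3) ⊆ closedBall z₀ δ := fun x hx =>
      mem_closedBall.2 (le_of_lt (lt_of_lt_of_le (mem_ball.1 hx) (by linarith)))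
    have hcoord : ∀ x y : Fin n → ℂ, ∀ i, ‖x i - y i‖ ≤ ‖x - y‖ := by
      intro x y i
      have := norm_le_pi_norm (x - y) i
      simpa using this
    have hmem : ∀ x ∈ closedBall z₀ δ, ∀ w : ℂ, ‖w - b j‖ < r j →
        Function.update x j w ∈ U := by
      intro x hx w hw i
      rcases eq_or_ne i j with rfl | hij
      · simpa using hw
      · rw [Function.update_of_ne hij]
        exact hδball hx i
    set γ : ℝ → ℂ := circleMap (b j) ρ with hγdef
    have hγabs : ∀ θ, ‖γ θ - b j‖ = ρ := by
      intro θ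
      simp only [hγdef, circleMap_sub_center, norm_circleMap_zero, abs_of_pos hρ0]
    have hγU : ∀ x ∈ closedBall z₀ δ, ∀ θ, Function.update x j (γ θ) ∈ U :=
      fun x hx θ => hmem x hx _ (by rw [hγabs]; exact hρr)
    have hxjA : ∀ x ∈ closedBall z₀ δ, ‖x j - b j‖ ≤ ρ - 3 * δ := by
      intro x hx
      have h1 : x j - b j = (x j - z₀ j) + (z₀ j - b j) := by ring
      have h2 : ‖x j - b j‖ ≤ ‖x j - z₀ j‖ + A := by
        rw [h1]; exact norm_add_le _ _
      have h3 : ‖x j - z₀ j‖ ≤ δ := by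
        refine le_trans (hcoord x z₀ j) ?_
        rw [← dist_eq_norm]; exact mem_closedBall.1 hx
      linarith
    have hden : ∀ x ∈ closedBall z₀ δ, ∀ θ, 3 * δ ≤ ‖γ θ - x j‖ := by
      intro x hx θ
      have h1 : γ θ - b j = (γ θ - x j) + (x j - b j) := by ring
      have h2 : ρ ≤ ‖γ θ - x j‖ + (ρ - 3 * δ) := by
        calc ρ = ‖γ θ - b j‖ := (hγabs θ).symm
          _ ≤ ‖γ θ - x j‖ + ‖x j - b j‖ := by
              rw [h1]; exact norm_add_le _ _
          _ ≤ ‖γ θ - x j‖ + (ρ - 3 * δ) := by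
              have := hxjA x hx; linarith
      linarith
    have hdenne : ∀ x ∈ closedBall z₀ δ, ∀ θ, γ θ - x j ≠ 0 := by
      intro x hx θ hcon
      have := hden x hx θ
      rw [hcon] at this
      simp only [norm_zero] at this
      linarith
    -- compactness bound
    set K : Set (Fin n → ℂ) := (fun p : (Fin n → ℂ) × ℂ => Function.update p.1 j p.2) ''
        ((closedBall z₀ δ) ×ˢ (sphere (b j) ρ)) with hKdef
    have hKcomp : IsCompact K :=
      ((isCompact_closedBall _ _).prod (isCompact_sphere _ _)).image (continuous_update2 j)
    have hKU : K ⊆ U := by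
      rintro _ ⟨⟨x, w⟩, ⟨hx, hw⟩, rfl⟩
      refine hmem x hx w ?_
      have : dist w (b j) = ρ := mem_sphere.1 hw
      rw [Complex.dist_eq] at this
      rw [this]; exact hρr
    obtain ⟨M₀, hM₀⟩ := hKcomp.exists_bound_of_continuousOn (hG.continuousOn.mono hKU)
    set M := max M₀ 0 with hMdef
    have hM0 : 0 ≤ M := le_max_right _ _
    have hMb : ∀ p ∈ K, ‖G p‖ ≤ M := fun p hp => le_trans (hM₀ p hp) (le_max_left _ _)
    have hKmem : ∀ x ∈ closedBall z₀ δ, ∀ θ, Function.update x j (γ θ) ∈ K := by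
      intro x hx θ
      exact ⟨(x, γ θ), ⟨hx, by simpa [hγdef] using circleMap_mem_sphere (b j) hρ0.le θ⟩, rfl⟩
    -- Lipschitz estimate for G along the circle, via the Schwarz lemma
    set CG := (2 * M + 1) * (3 / (2 * δ)) with hCGdef
    have hCG0 : 0 ≤ CG := by
      apply mul_nonneg (by linarith)
      positivity
    have hLipG : ∀ θ : ℝ, ∀ x ∈ ball z₀ (δ / 3), ∀ y ∈ ball z₀ (δ / 3),
        ‖G (Function.update x j (γ θ)) - G (Function.update y j (γ θ))‖ ≤ CG * ‖x - y‖ := by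
      intro θ x hx y hy
      rcases eq_or_ne y x with rfl | hxy
      · simp [mul_nonneg hCG0 (norm_nonneg _)]
      have hvpos : 0 < ‖y - x‖ := by
        rw [norm_pos_iff, sub_ne_zero]; exact hxy
      set v := y - x with hvdef
      set R₁ := (2 * δ / 3) / ‖v‖ with hR₁def
      have hvlt : ‖v‖ < 2 * δ / 3 := by
        have h1 : dist y z₀ < δ / 3 := mem_ball.1 hy
        have h2 : dist x z₀ < δ / 3 := mem_ball.1 hx
        calc ‖v‖ = dist y x := by rw [dist_eq_norm]
          _ ≤ dist y z₀ + dist z₀ x := dist_triangle _ _ _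
          _ < δ / 3 + δ / 3 := by rw [dist_comm z₀ x]; linarith
          _ ≤ 2 * δ / 3 := by linarith
      have hR₁1 : 1 < R₁ := (one_lt_div hvpos).2 hvlt
      set φ : ℂ → ℂ := fun s => G (Function.update (x + s • v) j (γ θ)) with hφdef
      have hbase : ∀ s : ℂ, s ∈ ball (0 : ℂ) R₁ → x + s • v ∈ closedBall z₀ δ := by
        intro s hs
        rw [mem_closedBall, dist_eq_norm]
        have he : x + s • v - z₀ = (x - z₀) + s • v := by abel
        rw [he]
        have h1 : ‖x - z₀‖ ≤ δ / 3 := by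
          rw [← dist_eq_norm]; exact le_of_lt (mem_ball.1 hx)
        have h2 : ‖s • v‖ ≤ R₁ * ‖v‖ := by
          rw [norm_smul]
          apply mul_le_mul_of_nonneg_right _ (norm_nonneg _)
          have := mem_ball.1 hs
          rw [dist_zero_right] at this
          exact le_of_lt this
        have h3 : R₁ * ‖v‖ = 2 * δ / 3 := div_mul_cancel₀ _ (ne_of_gt hvpos)
        calc ‖(x - z₀) + s • v‖ ≤ ‖x - z₀‖ + ‖s • v‖ := norm_add_le _ _
          _ ≤ δ / 3 + 2 * δ / 3 := by rw [← h3]; exact add_le_add h1 h2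
          _ ≤ δ := by linarith
      have haff : Differentiable ℂ (fun s : ℂ => x + s • v) :=
        (differentiable_const x).add (differentiable_id.smul_const v)
      have hφd : DifferentiableOn ℂ φ (ball 0 R₁) := by
        intro s hs
        have hupd : Function.update (x + s • v) j (γ θ) ∈ U := hγU _ (hbase s hs) θ
        have hGd : DifferentiableAt ℂ G (Function.update (x + s • v) j (γ θ)) :=
          hG.differentiableAt (hUopen.mem_nhds hupd)
        have hinner : DifferentiableAt ℂ (fun s : ℂ => Function.update (x + s • v) j (γ θ)) s := by
          have heq : (fun s : ℂ => Function.update (x + s • v) j (γ θ))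
              = fun s : ℂ => Ej j (x + s • v) + (γ θ) • (Pi.single j 1 : Fin n → ℂ) :=
            funext fun s => update_eq_affine j _ _
          rw [heq]
          exact (((Ej j).differentiable.comp haff).add_const _).differentiableAt
        exact (hGd.comp s hinner).differentiableWithinAt
      have h0mem : (0 : ℂ) ∈ ball (0 : ℂ) R₁ := mem_ball_self (by linarith)
      have h1mem : (1 : ℂ) ∈ ball (0 : ℂ) R₁ := by
        rw [mem_ball, dist_zero_right]
        simpa using hR₁1
      have hφmaps : MapsTo φ (ball 0 R₁) (ball (φ 0) (2 * M + 1)) := by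
        intro s hs
        rw [mem_ball, dist_eq_norm]
        have hb1 : ‖φ s‖ ≤ M := hMb _ (hKmem _ (hbase s hs) θ)
        have hb2 : ‖φ 0‖ ≤ M := hMb _ (hKmem _ (hbase 0 h0mem) θ)
        calc ‖φ s - φ 0‖ ≤ ‖φ s‖ + ‖φ 0‖ := norm_sub_le _ _
          _ ≤ M + M := add_le_add hb1 hb2
          _ < 2 * M + 1 := by linarith
      have hSch := Complex.norm_dslope_le_div_of_mapsTo_ball hφd (hφmaps.mono_right ball_subset_closedBall) h1mem
      have hφsub : φ 1 - φ 0 = dslope φ 0 1 := by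
        have := sub_smul_dslope φ 0 1
        simpa using this.symm
      have hφ1 : φ 1 = G (Function.update y j (γ θ)) := by
        simp only [hφdef, one_smul, hvdef]
        norm_num
      have hφ0 : φ 0 = G (Function.update x j (γ θ)) := by
        simp only [hφdef, zero_smul, add_zero]
      have hnorm : ‖x - y‖ = ‖v‖ := by rw [hvdef, norm_sub_rev]
      calc ‖G (Function.update x j (γ θ)) - G (Function.update y j (γ θ))‖
          = ‖φ 1 - φ 0‖ := by rw [hφ1, hφ0, norm_sub_rev]
        _ = ‖dslope φ 0 1‖ := by rw [hφsub]
        _ ≤ (2 * M + 1) / R₁ := hSch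
        _ = (2 * M + 1) * ‖v‖ * 3 / (2 * δ) := by
            rw [hR₁def]
            field_simp
        _ = CG * ‖x - y‖ := by rw [hCGdef, hnorm]; field_simp
    -- parametric Cauchy-type integrand
    set F : (Fin n → ℂ) → ℝ → ℂ := fun x θ =>
      deriv γ θ • (((γ θ - b j)⁻¹ * (γ θ - x j)⁻¹) • G (Function.update x j (γ θ))) with hFdef
    have hcircle : ∀ x : Fin n → ℂ, (∫ θ in (0:ℝ)..(2 * Real.pi), F x θ)
        = ∮ w in C(b j, ρ), ((w - b j)⁻¹ * (w - x j)⁻¹) • G (Function.update x j w) := by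
      intro x; rfl
    -- Cauchy representation of h on the small ball
    have hrep : ∀ x ∈ ball z₀ (δ / 3),
        h x = (2 * Real.pi * Complex.I : ℂ)⁻¹ • ∫ θ in (0:ℝ)..(2 * Real.pi), F x θ := by
      intro x hx
      have hxcb : x ∈ closedBall z₀ δ := hball3 hx
      set sx : ℂ → ℂ := fun w => G (Function.update x j w) with hsxdef
      have hsxdAt : ∀ w : ℂ, ‖w - b j‖ < r j → DifferentiableAt ℂ sx w := by
        intro w hw
        have hupd : Function.update x j w ∈ U := hmem x hxcb w hw
        have hGd : DifferentiableAt ℂ G (Function.update x j w) :=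
          hG.differentiableAt (hUopen.mem_nhds hupd)
        have hinner : DifferentiableAt ℂ (fun a : ℂ => Function.update x j a) w := by
          have heq : (fun a : ℂ => Function.update x j a)
              = fun a : ℂ => Ej j x + a • (Pi.single j 1 : Fin n → ℂ) :=
            funext fun a => update_eq_affine j x a
          rw [heq]
          exact ((differentiable_id.smul_const _).const_add _).differentiableAt
        exact hGd.comp w hinner
      have hsxcb : DifferentiableOn ℂ sx (closedBall (b j) ρ) := by
        intro w hw
        have hle : ‖w - b j‖ ≤ ρ := by
          rw [← Complex.dist_eq]; exact mem_closedBall.1 hw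
        exact (hsxdAt w (lt_of_le_of_lt hle hρr)).differentiableWithinAt
      have hdcc : DiffContOnCl ℂ sx (ball (b j) ρ) :=
        DifferentiableOn.diffContOnCl (by rw [closure_ball _ (ne_of_gt hρ0)]; exact hsxcb)
      have hxjb : x j ∈ ball (b j) ρ := by
        rw [mem_ball, Complex.dist_eq]
        have := hxjA x hxcb
        linarith
      rw [hcircle x]
      rcases eq_or_ne (x j) (b j) with hxj | hxj
      · -- center case via power series coefficient
        set ρn : NNReal := ⟨ρ, hρ0.le⟩ with hρn
        have hcoρ : (ρn : ℝ) = ρ := rfl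
        have hps : HasFPowerSeriesOnBall sx (cauchyPowerSeries sx (b j) ρn) (b j) ρn :=
          DifferentiableOn.hasFPowerSeriesOnBall (by rw [hcoρ]; exact hsxcb)
            (by rw [← NNReal.coe_pos, hcoρ]; exact hρ0)
      -- deriv = first Cauchy coefficient
        have hder : deriv sx (b j) = cauchyPowerSeries sx (b j) ρn 1 (fun _ => 1) :=
          hps.hasFPowerSeriesAt.deriv
        have happ := cauchyPowerSeries_apply sx (b j) ρ 1 1
        have hder2 : deriv sx (b j) = (2 * Real.pi * Complex.I : ℂ)⁻¹ •
            ∮ w in C(b j, ρ), ((1:ℂ) / (w - b j)) ^ 1 • (w - b j)⁻¹ • sx w := by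
          rw [hder]
          rw [show cauchyPowerSeries sx (b j) (ρn : ℝ) = cauchyPowerSeries sx (b j) ρ from by
            rw [hcoρ]]
          exact happ
        have hint : (∮ w in C(b j, ρ), ((1:ℂ) / (w - b j)) ^ 1 • (w - b j)⁻¹ • sx w)
            = ∮ w in C(b j, ρ), ((w - b j)⁻¹ * (w - x j)⁻¹) • sx w := by
          congr 1
          funext w
          rw [hxj]
          simp only [smul_smul, one_div, pow_one]
        have hhx : h x = deriv sx (b j) := by
          simp only [hh]
          rw [← hsxdef, hxj, dslope_same]
        rw [hhx, hder2, hint]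
      · -- off-center case via the Cauchy integral formula
        have hsxc : ContinuousOn sx (sphere (b j) ρ) := by
          intro w hw
          have habs : ‖w - b j‖ = ρ := by
            rw [← Complex.dist_eq]; exact mem_sphere.1 hw
          exact ((hsxdAt w (by rw [habs]; exact hρr)).continuousAt).continuousWithinAt
        have hwne : ∀ w ∈ sphere (b j) ρ, w - x j ≠ 0 := by
          intro w hw hcon
          have habs : ‖w - b j‖ = ρ := by
            rw [← Complex.dist_eq]; exact mem_sphere.1 hw
          have hxw : w = x j := by rwa [sub_eq_zero] at hcon
          rw [hxw] at habs
          have := hxjA x hxcb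
          rw [habs] at this
          linarith
        have hwnb : ∀ w ∈ sphere (b j) ρ, w - b j ≠ 0 := by
          intro w hw hcon
          have habs : ‖w - b j‖ = ρ := by
            rw [← Complex.dist_eq]; exact mem_sphere.1 hw
          rw [hcon] at habs
          simp only [norm_zero] at habs
          linarith
        have hci1 : CircleIntegrable (fun w => (w - x j)⁻¹ • sx w) (b j) ρ := by
          apply ContinuousOn.circleIntegrable hρ0.le
          exact (((continuous_id.sub continuous_const).continuousOn).inv₀ hwne).smul hsxc
        have hci2 : CircleIntegrable (fun w => (w - b j)⁻¹ • sx w) (b j) ρ := by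
          apply ContinuousOn.circleIntegrable hρ0.le
          exact (((continuous_id.sub continuous_const).continuousOn).inv₀ hwnb).smul hsxc
        have hI1 := hdcc.circleIntegral_sub_inv_smul hxjb
        have hI2 := hdcc.circleIntegral_sub_inv_smul (mem_ball_self hρ0)
        have hsub := circleIntegral.integral_sub hci1 hci2
        have hEq : Set.EqOn (fun w => (w - x j)⁻¹ • sx w - (w - b j)⁻¹ • sx w)
            (fun w => (x j - b j) • (((w - b j)⁻¹ * (w - x j)⁻¹) • sx w)) (sphere (b j) ρ) := by
          intro w hw
          have h1 := hwne w hw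
          have h2 := hwnb w hw
          simp only [smul_eq_mul]
          field_simp
          ring
        have hcongr := circleIntegral.integral_congr hρ0.le hEq
        have hsmul := circleIntegral.integral_smul (x j - b j)
            (fun w => ((w - b j)⁻¹ * (w - x j)⁻¹) • sx w) (b j) ρ
        have hkey : (x j - b j) • (∮ w in C(b j, ρ), ((w - b j)⁻¹ * (w - x j)⁻¹) • sx w)
            = (2 * Real.pi * Complex.I) • (sx (x j) - sx (b j)) := by
          rw [← hsmul, ← hcongr, hsub, hI1, hI2, ← smul_sub]
        have hxjne : x j - b j ≠ 0 := sub_ne_zero.2 hxj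
        have h2πI : (2 * Real.pi * Complex.I : ℂ) ≠ 0 := by
          simp [Real.pi_ne_zero, Complex.I_ne_zero]
        have hdsl : h x = (x j - b j)⁻¹ * (sx (x j) - sx (b j)) := by
          simp only [hh]
          rw [← hsxdef, dslope_of_ne _ hxj, slope_def_module, smul_eq_mul]
        rw [hdsl]
        simp only [smul_eq_mul] at hkey ⊢
        set Q := ∮ w in C(b j, ρ), (w - b j)⁻¹ * (w - x j)⁻¹ * sx w with hQdef
        have hS : sx (x j) - sx (b j)
            = (2 * Real.pi * Complex.I : ℂ)⁻¹ * ((x j - b j) * Q) := by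
          rw [hkey, inv_mul_cancel_left₀ h2πI]
        rw [hS]
        field_simp
    -- differentiation under the integral sign
    set P : ℝ → (Fin n → ℂ) := fun θ => Function.update z₀ j (γ θ) with hPdef
    have hz₀cb : z₀ ∈ closedBall z₀ δ := mem_closedBall_self hδ0.le
    have hPU : ∀ θ, P θ ∈ U := fun θ => hγU z₀ hz₀cb θ
    have hGdP : ∀ θ, DifferentiableAt ℂ G (P θ) := fun θ =>
      hG.differentiableAt (hUopen.mem_nhds (hPU θ))
    have hnez : ∀ θ, γ θ - z₀ j ≠ 0 := fun θ => hdenne z₀ hz₀cb θ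
    set F' : ℝ → (Fin n → ℂ) →L[ℂ] ℂ := fun θ =>
      (deriv γ θ * (γ θ - b j)⁻¹) •
        ((γ θ - z₀ j)⁻¹ • ((fderiv ℂ G (P θ)).comp (Ej j)) +
          G (P θ) • ((-((γ θ - z₀ j) ^ 2)⁻¹) •
            (-(ContinuousLinearMap.proj j : (Fin n → ℂ) →L[ℂ] ℂ)))) with hF'def
    have hdiffF : ∀ θ : ℝ, HasFDerivAt (fun x => F x θ) (F' θ) z₀ := by
      intro θ
      have d1 : HasFDerivAt (fun x : Fin n → ℂ => G (Function.update x j (γ θ)))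
          ((fderiv ℂ G (P θ)).comp (Ej j)) z₀ :=
        ((hGdP θ).hasFDerivAt).comp z₀ (hasFDerivAt_update_const j (γ θ) z₀)
      have d2i : HasFDerivAt (fun x : Fin n → ℂ => γ θ - x j)
          (-(ContinuousLinearMap.proj j : (Fin n → ℂ) →L[ℂ] ℂ)) z₀ :=
        (hasFDerivAt_apply j z₀).const_sub (γ θ)
      have d2 : HasFDerivAt (fun x : Fin n → ℂ => (γ θ - x j)⁻¹)
          ((-((γ θ - z₀ j) ^ 2)⁻¹) •
            (-(ContinuousLinearMap.proj j : (Fin n → ℂ) →L[ℂ] ℂ))) z₀ :=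
        (hasDerivAt_inv (hnez θ)).comp_hasFDerivAt z₀ d2i
      have d3 := d2.mul d1
      have d4 := d3.const_mul (deriv γ θ * (γ θ - b j)⁻¹)
      have hFeq : (fun x => F x θ) = fun x =>
          (deriv γ θ * (γ θ - b j)⁻¹) *
            ((γ θ - x j)⁻¹ * G (Function.update x j (γ θ))) := by
        funext y
        simp only [hFdef, smul_eq_mul]
        ring
      rw [hFeq]
      exact d4
    have cγ : Continuous γ := by rw [hγdef]; exact continuous_circleMap _ _
    have cderiv : Continuous fun θ => deriv γ θ := by
      have hdeq : (fun θ => deriv γ θ) = fun θ => circleMap 0 ρ θ * Complex.I := by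
        funext θ; rw [hγdef]; exact deriv_circleMap _ _ _
      rw [hdeq]
      exact (continuous_circleMap _ _).mul continuous_const
    have cinv1 : Continuous fun θ => (γ θ - b j)⁻¹ :=
      (cγ.sub continuous_const).inv₀ fun θ => by
        rw [hγdef]; exact sub_ne_zero.2 (circleMap_ne_center (ne_of_gt hρ0))
    have cinv2 : Continuous fun θ => (γ θ - z₀ j)⁻¹ :=
      (cγ.sub continuous_const).inv₀ hnez
    have cGP : Continuous fun θ => G (P θ) :=
      hG.continuousOn.comp_continuous ((continuous_update_right j z₀).comp cγ) hPU
    have hF'meas : AEStronglyMeasurable F'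
        (MeasureTheory.volume.restrict (Set.uIoc 0 (2 * Real.pi))) := by
      have m0 : StronglyMeasurable fun θ => fderiv ℂ G (P θ) :=
        ((measurable_fderiv ℂ G).comp
          (((continuous_update_right j z₀).comp cγ).measurable)).stronglyMeasurable
      have m1 : StronglyMeasurable fun θ => (fderiv ℂ G (P θ)).comp (Ej j) := by
        have hcont : Continuous fun ψ : (Fin n → ℂ) →L[ℂ] ℂ => ψ.comp (Ej j) :=
          ((ContinuousLinearMap.compL ℂ (Fin n → ℂ) (Fin n → ℂ) ℂ).flip (Ej j)).continuous
        exact hcont.comp_stronglyMeasurable m0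
      refine StronglyMeasurable.aestronglyMeasurable ?_
      refine StronglyMeasurable.smul (cderiv.mul cinv1).stronglyMeasurable ?_
      refine StronglyMeasurable.add (cinv2.stronglyMeasurable.smul m1) ?_
      refine StronglyMeasurable.smul cGP.stronglyMeasurable ?_
      exact ((Continuous.neg (((cγ.sub continuous_const).pow 2).inv₀
        fun θ => pow_ne_zero _ (hnez θ))).smul continuous_const).stronglyMeasurable
    have hContFx : ∀ x ∈ ball z₀ (δ / 3), Continuous fun θ => F x θ := by
      intro x hx
      have hxcb := hball3 hx
      have cinvx : Continuous fun θ => (γ θ - x j)⁻¹ :=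
        (cγ.sub continuous_const).inv₀ fun θ => hdenne x hxcb θ
      have cGx : Continuous fun θ => G (Function.update x j (γ θ)) :=
        hG.continuousOn.comp_continuous ((continuous_update_right j x).comp cγ)
          fun θ => hγU x hxcb θ
      simp only [hFdef]
      exact cderiv.smul ((cinv1.mul cinvx).smul cGx)
    have hF_meas : ∀ᶠ x in nhds z₀,
        AEStronglyMeasurable (F x)
          (MeasureTheory.volume.restrict (Set.uIoc 0 (2 * Real.pi))) := by
      filter_upwards [Metric.ball_mem_nhds z₀ (show (0:ℝ) < δ / 3 by linarith)] with x hx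
      exact (hContFx x hx).aestronglyMeasurable
    have hF_int : IntervalIntegrable (F z₀) MeasureTheory.volume 0 (2 * Real.pi) :=
      (hContFx z₀ (mem_ball_self (by linarith))).intervalIntegrable _ _
    set CF := (3 * δ)⁻¹ * CG + (3 * δ)⁻¹ * ((3 * δ)⁻¹ * M) with hCFdef
    have h_lip : ∀ᵐ θ ∂MeasureTheory.volume, θ ∈ Set.uIoc 0 (2 * Real.pi) →
        LipschitzOnWith (Real.nnabs CF) (fun x => F x θ) (ball z₀ (δ / 3)) := by
      refine Filter.Eventually.of_forall fun θ _ => ?_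
      refine LipschitzOnWith.of_dist_le_mul fun x hx y hy => ?_
      have hxcb := hball3 hx
      have hycb := hball3 hy
      rw [dist_eq_norm, dist_eq_norm]
      have hexp : F x θ - F y θ = (deriv γ θ * (γ θ - b j)⁻¹) *
          ((γ θ - x j)⁻¹ * (G (Function.update x j (γ θ)) - G (Function.update y j (γ θ)))
            + ((γ θ - x j)⁻¹ - (γ θ - y j)⁻¹) * G (Function.update y j (γ θ))) := by
        simp only [hFdef, smul_eq_mul]
        ring
      have hnd : ‖deriv γ θ‖ = ρ := by
        rw [hγdef, deriv_circleMap]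
        simp [norm_circleMap_zero, abs_of_pos hρ0]
      have hn1 : ‖(γ θ - b j)⁻¹‖ = ρ⁻¹ := by
        rw [norm_inv, hγabs]
      have h3δ : (0:ℝ) < 3 * δ := by linarith
      have hnx : ‖(γ θ - x j)⁻¹‖ ≤ (3 * δ)⁻¹ := by
        rw [norm_inv]
        exact inv_anti₀ h3δ (hden x hxcb θ)
      have hny : ‖(γ θ - y j)⁻¹‖ ≤ (3 * δ)⁻¹ := by
        rw [norm_inv]
        exact inv_anti₀ h3δ (hden y hycb θ)
      have hGxy : ‖G (Function.update x j (γ θ)) - G (Function.update y j (γ θ))‖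
          ≤ CG * ‖x - y‖ := hLipG θ x hx y hy
      have hGy : ‖G (Function.update y j (γ θ))‖ ≤ M := hMb _ (hKmem y hycb θ)
      have hdiffinv : (γ θ - x j)⁻¹ - (γ θ - y j)⁻¹
          = (x j - y j) * ((γ θ - x j)⁻¹ * (γ θ - y j)⁻¹) := by
        have h1 := hdenne x hxcb θ
        have h2 := hdenne y hycb θ
        field_simp
        ring
      have hxyj : ‖x j - y j‖ ≤ ‖x - y‖ := by
        have := hcoord x y j
        exact this
      have hb1 : ‖(γ θ - x j)⁻¹ *
          (G (Function.update x j (γ θ)) - G (Function.update y j (γ θ)))‖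
          ≤ (3 * δ)⁻¹ * (CG * ‖x - y‖) := by
        rw [norm_mul]
        exact mul_le_mul hnx hGxy (norm_nonneg _) (by positivity)
      have hb2 : ‖((γ θ - x j)⁻¹ - (γ θ - y j)⁻¹) * G (Function.update y j (γ θ))‖
          ≤ (‖x - y‖ * ((3 * δ)⁻¹ * (3 * δ)⁻¹)) * M := by
        rw [hdiffinv, norm_mul, norm_mul, norm_mul]
        have hkxky : ‖(γ θ - x j)⁻¹‖ * ‖(γ θ - y j)⁻¹‖ ≤ (3 * δ)⁻¹ * (3 * δ)⁻¹ :=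
          mul_le_mul hnx hny (norm_nonneg _) (by positivity)
        exact mul_le_mul (mul_le_mul hxyj hkxky
          (by positivity) (norm_nonneg _)) hGy (norm_nonneg _) (by positivity)
      have hone : ‖deriv γ θ * (γ θ - b j)⁻¹‖ = 1 := by
        rw [norm_mul, hnd, hn1]
        field_simp
      calc ‖F x θ - F y θ‖
          = ‖deriv γ θ * (γ θ - b j)⁻¹‖ *
            ‖(γ θ - x j)⁻¹ * (G (Function.update x j (γ θ)) - G (Function.update y j (γ θ)))
              + ((γ θ - x j)⁻¹ - (γ θ - y j)⁻¹) * G (Function.update y j (γ θ))‖ := by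
            rw [hexp, norm_mul]
        _ ≤ 1 * (‖(γ θ - x j)⁻¹ *
              (G (Function.update x j (γ θ)) - G (Function.update y j (γ θ)))‖
            + ‖((γ θ - x j)⁻¹ - (γ θ - y j)⁻¹) * G (Function.update y j (γ θ))‖) := by
            rw [hone]
            exact mul_le_mul_of_nonneg_left (norm_add_le _ _) (by norm_num)
        _ ≤ 1 * ((3 * δ)⁻¹ * (CG * ‖x - y‖) + (‖x - y‖ * ((3 * δ)⁻¹ * (3 * δ)⁻¹)) * M) := by
            exact mul_le_mul_of_nonneg_left (add_le_add hb1 hb2) (by norm_num)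
        _ = CF * ‖x - y‖ := by rw [hCFdef]; ring
        _ ≤ |CF| * ‖x - y‖ := mul_le_mul_of_nonneg_right (le_abs_self _) (norm_nonneg _)
        _ = ↑(Real.nnabs CF) * ‖x - y‖ := by rw [Real.coe_nnabs]
    obtain ⟨-, hHas⟩ := intervalIntegral.hasFDerivAt_integral_of_dominated_loc_of_lip
      (Metric.ball_mem_nhds z₀ (show (0:ℝ) < δ / 3 by linarith)) hF_meas hF_int hF'meas h_lip
      intervalIntegrable_const (Filter.Eventually.of_forall fun θ _ => hdiffF θ)
    have hΨ : DifferentiableAt ℂ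
        (fun x => (2 * Real.pi * Complex.I : ℂ)⁻¹ •
          ∫ θ in (0:ℝ)..(2 * Real.pi), F x θ) z₀ :=
      (hHas.differentiableAt).fun_const_smul _
    have hev : h =ᶠ[nhds z₀]
        fun x => (2 * Real.pi * Complex.I : ℂ)⁻¹ •
          ∫ θ in (0:ℝ)..(2 * Real.pi), F x θ := by
      filter_upwards [Metric.ball_mem_nhds z₀ (show (0:ℝ) < δ / 3 by linarith)] with x hx
      exact hrep x hx
    exact (hΨ.congr_of_eventuallyEq hev).differentiableWithinAt


  · -- the identity
    intro z hz
    have h1 := sub_smul_dslope (fun w => G (Function.update z j w)) (b j) (z j)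
    simp only [Function.update_eq_self] at h1
    simp only [smul_eq_mul] at h1
    simp only [hh]
    linear_combination -h1

end Stmt1Aux


/-- Division of a holomorphic function on a polydisc by
`z₁ - b₁, …, z_q - b_q` with remainder depending only on the last `n - q` variables. -/
theorem stmt_1 (n q : ℕ) (hq1 : 1 ≤ q) (hqn : q ≤ n)
    (b : Fin n → ℂ) (r : Fin n → ℝ) (hr : ∀ j, 0 < r j)
    (f : (Fin n → ℂ) → ℂ)
    (hf : DifferentiableOn ℂ f {z | ∀ j, ‖z j - b j‖ < r j}) :
    ∃ (h : Fin q → (Fin n → ℂ) → ℂ)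
      (g : ({j : Fin n // q ≤ (j : ℕ)} → ℂ) → ℂ),
      (∀ j, DifferentiableOn ℂ (h j) {z | ∀ j, ‖z j - b j‖ < r j}) ∧
      DifferentiableOn ℂ g
        {w : {j : Fin n // q ≤ (j : ℕ)} → ℂ |
          ∀ j, ‖w j - b j.val‖ < r j.val} ∧
      ∀ z ∈ {z : Fin n → ℂ | ∀ j, ‖z j - b j‖ < r j},
        f z = (∑ j : Fin q, (z (Fin.castLE hqn j) - b (Fin.castLE hqn j)) * h j z)
          + g (fun j => z j.val) := by
  classical
  set U : Set (Fin n → ℂ) := {z | ∀ j, ‖z j - b j‖ < r j} with hUdef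
  set σ : ℕ → (Fin n → ℂ) → (Fin n → ℂ) := fun k z i => if (i : ℕ) < k then b i else z i
    with hσdef
  have hσd : ∀ k, Differentiable ℂ (σ k) := by
    intro k
    apply differentiable_pi.2
    intro i
    by_cases hik : (i : ℕ) < k
    · simp only [hσdef, if_pos hik]
      exact differentiable_const _
    · simp only [hσdef, if_neg hik]
      exact fun x => (hasFDerivAt_apply i x).differentiableAt
  have hσU : ∀ k, Set.MapsTo (σ k) U U := by
    intro k z hz i
    by_cases hik : (i : ℕ) < k
    · simp only [hσdef, if_pos hik]
      simpa using hr i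
    · simp only [hσdef, if_neg hik]
      exact hz i
  have hGd : ∀ k : ℕ, DifferentiableOn ℂ (fun z => f (σ k z)) U := fun k =>
    hf.comp ((hσd k).differentiableOn) (hσU k)
  have hkey : ∀ j : Fin q, ∃ h : (Fin n → ℂ) → ℂ, DifferentiableOn ℂ h U ∧
      ∀ z ∈ U, f (σ (j : ℕ) z) = f (σ (j : ℕ) (Function.update z (Fin.castLE hqn j)
        (b (Fin.castLE hqn j)))) + (z (Fin.castLE hqn j) - b (Fin.castLE hqn j)) * h z :=
    fun j => keyDiv b r hr (Fin.castLE hqn j) _ (hGd (j : ℕ))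
  choose H hH1 hH2 using hkey
  have hσstep : ∀ (j : Fin q) (z : Fin n → ℂ),
      σ (j : ℕ) (Function.update z (Fin.castLE hqn j) (b (Fin.castLE hqn j)))
        = σ ((j : ℕ) + 1) z := by
    intro j z
    funext i
    simp only [hσdef]
    rcases eq_or_ne i (Fin.castLE hqn j) with rfl | hne
    · simp only [Function.update_self, ite_self]
      have hc : ((Fin.castLE hqn j : Fin n) : ℕ) = (j : ℕ) := rfl
      rw [if_pos (by rw [hc]; exact Nat.lt_succ_self _)]
    · rw [Function.update_of_ne hne]
      have hij : (i : ℕ) ≠ (j : ℕ) := by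
        intro hc
        exact hne (Fin.ext (by simpa using hc))
      by_cases hik : (i : ℕ) < (j : ℕ)
      · rw [if_pos hik, if_pos (Nat.lt_succ_of_lt hik)]
      · rw [if_neg hik, if_neg (by omega)]
  set g : ({j : Fin n // q ≤ (j : ℕ)} → ℂ) → ℂ :=
    fun w => f (fun i => if hqi : q ≤ (i : ℕ) then w ⟨i, hqi⟩ else b i) with hgdef
  have hΦd : Differentiable ℂ
      (fun w : {j : Fin n // q ≤ (j : ℕ)} → ℂ =>
        (fun i => if hqi : q ≤ (i : ℕ) then w ⟨i, hqi⟩ else b i : Fin n → ℂ)) := by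
    apply differentiable_pi.2
    intro i
    by_cases hqi : q ≤ (i : ℕ)
    · simp only [dif_pos hqi]
      exact fun x => (hasFDerivAt_apply _ x).differentiableAt
    · simp only [dif_neg hqi]
      exact differentiable_const _
  have hΦU : ∀ w ∈ {w : {j : Fin n // q ≤ (j : ℕ)} → ℂ |
      ∀ j, ‖w j - b j.val‖ < r j.val},
      (fun i => if hqi : q ≤ (i : ℕ) then w ⟨i, hqi⟩ else b i : Fin n → ℂ) ∈ U := by
    intro w hw i
    by_cases hqi : q ≤ (i : ℕ)
    · simp only [dif_pos hqi]
      exact hw ⟨i, hqi⟩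
    · simp only [dif_neg hqi]
      simpa using hr i
  have hgd : DifferentiableOn ℂ g {w : {j : Fin n // q ≤ (j : ℕ)} → ℂ |
      ∀ j, ‖w j - b j.val‖ < r j.val} :=
    hf.comp (hΦd.differentiableOn) hΦU
  refine ⟨H, g, hH1, hgd, ?_⟩
  intro z hz
  have hterm : ∀ j : Fin q,
      (z (Fin.castLE hqn j) - b (Fin.castLE hqn j)) * H j z
        = f (σ (j : ℕ) z) - f (σ ((j : ℕ) + 1) z) := by
    intro j
    have h2 := hH2 j z hz
    rw [hσstep j z] at h2
    linear_combination -h2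
  have htele : ∑ j : Fin q, (f (σ (j : ℕ) z) - f (σ ((j : ℕ) + 1) z))
      = f (σ 0 z) - f (σ q z) := by
    rw [Fin.sum_univ_eq_sum_range (fun k => f (σ k z) - f (σ (k + 1) z)) q]
    exact Finset.sum_range_sub' (fun k => f (σ k z)) q
  have hσ0 : σ 0 z = z := by
    funext i
    simp [hσdef]
  have hσq : f (σ q z) = g (fun j => z j.val) := by
    simp only [hgdef]
    congr 1
    funext i
    by_cases hqi : q ≤ (i : ℕ)
    · simp only [hσdef, dif_pos hqi, if_neg (Nat.not_lt.2 hqi)]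
    · simp only [hσdef, dif_neg hqi, if_pos (Nat.lt_of_not_le hqi)]
  have hsum : ∑ j : Fin q, (z (Fin.castLE hqn j) - b (Fin.castLE hqn j)) * H j z
      = f z - g (fun j => z j.val) := by
    rw [Finset.sum_congr rfl fun j _ => hterm j, htele, hσ0, hσq]
  linear_combination -hsum
end

section
/- Let PΔ ⊆ ℂⁿ be an open polydisc centered at 0, let 1 ≤ q ≤ n, and let N ≥ q. Set σ_j(z) = z_j for 1 ≤ j ≤ q and σ_i(z) = Σ_{j=1}^q a_{ij}(z)·z_j for q+1 ≤ i ≤ N, where the a_{ij} are holomorphic on PΔ. Define the N-tuples τ_{jk} (1 ≤ j < k ≤ q) with −σ_k in slot j, σ_j in slot k, and 0 elsewhere, and φ_i = (−a_{i1}, …, −a_{iq}, 0, …, 0, 1 in slot i, 0, …, 0) for q+1 ≤ i ≤ N. Then for every b ∈ PΔ and every N-tuple (f₁, …, f_N) of functions holomorphic in a neighborhood of b with Σ_{j=1}^N f_j·σ_j = 0 near b, there exist holomorphic functions b_{jk} (1 ≤ j < k ≤ q) in a neighborhood of b such that (f₁, …, f_N) = Σ_{1≤j<k≤q} b_{jk}·τ_{jk}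 + Σ_{i=q+1}^N f_i·φ_i in a neighborhood of b. -/
set_option maxHeartbeats 1000000
open Metric Complex MeasureTheory intervalIntegral

lemma cauchy_fderiv_bound {n : ℕ} {U : Set (Fin n → ℂ)} (hU : IsOpen U)
    {h : (Fin n → ℂ) → ℂ} (hh : DifferentiableOn ℂ h U)
    {u : Fin n → ℂ} {ρ M : ℝ} (hρ : 0 < ρ) (hsub : closedBall u ρ ⊆ U)
    (hM : ∀ z ∈ closedBall u ρ, ‖h z‖ ≤ M) :
    ‖fderiv ℂ h u‖ ≤ M / ρ := by
  have hM0 : 0 ≤ M := le_trans (norm_nonneg _) (hM u (mem_closedBall_self hρ.le))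
  refine ContinuousLinearMap.opNorm_le_bound _ (by positivity) (fun v => ?_)
  rcases eq_or_ne v 0 with rfl | hv
  · simp
  · set v' : Fin n → ℂ := ‖v‖⁻¹ • v with hv'
    have hv'norm : ‖v'‖ = 1 := by
      rw [hv', norm_smul, norm_inv, norm_norm, inv_mul_cancel₀ (norm_ne_zero_iff.2 hv)]
    have hmem : ∀ t : ℂ, t ∈ closedBall (0:ℂ) ρ → u + t • v' ∈ closedBall u ρ := by
      intro t ht
      simp only [mem_closedBall, dist_self_add_left] at *
      rw [norm_smul, hv'norm, mul_one]
      simpa using ht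
    have hd : ∀ t : ℂ, t ∈ closedBall (0:ℂ) ρ → DifferentiableAt ℂ (fun t : ℂ => h (u + t • v')) t := by
      intro t ht
      have h1 : DifferentiableAt ℂ h (u + t • v') :=
        hh.differentiableAt (hU.mem_nhds (hsub (hmem t ht)))
      exact h1.comp t (by fun_prop)
    have hder : HasDerivAt (fun t : ℂ => h (u + t • v')) (fderiv ℂ h u v') 0 := by
      have h1 : HasFDerivAt h (fderiv ℂ h u) u :=
        (hh.differentiableAt (hU.mem_nhds (hsub (mem_closedBall_self hρ.le)))).hasFDerivAt
      have h2 : HasDerivAt (fun t : ℂ => u + t • v') v' 0 := by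
        simpa using ((hasDerivAt_id (0:ℂ)).smul_const v').const_add u
      have h1' : HasFDerivAt h (fderiv ℂ h u) (u + (0:ℂ) • v') := by simpa using h1
      exact h1'.comp_hasDerivAt 0 h2
    have hcl : DiffContOnCl ℂ (fun t : ℂ => h (u + t • v')) (ball (0:ℂ) ρ) := by
      refine ⟨fun t ht => (hd t (ball_subset_closedBall ht)).differentiableWithinAt, ?_⟩
      rw [closure_ball (0:ℂ) hρ.ne']
      exact fun t ht => (hd t ht).continuousAt.continuousWithinAt
    have key : ‖deriv (fun t : ℂ => h (u + t • v')) 0‖ ≤ M / ρ := by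
      refine Complex.norm_deriv_le_of_forall_mem_sphere_norm_le hρ hcl (fun t ht => ?_)
      exact hM _ (hmem t (sphere_subset_closedBall ht))
    rw [hder.deriv] at key
    have hvv : (fderiv ℂ h u) v = ‖v‖ • (fderiv ℂ h u) v' := by
      rw [← ContinuousLinearMap.map_smul_of_tower]
      congr 1
      rw [hv', smul_smul, mul_inv_cancel₀ (norm_ne_zero_iff.2 hv), one_smul]
    rw [hvv, norm_smul, norm_norm, mul_comm]
    exact mul_le_mul_of_nonneg_right key (norm_nonneg v)

noncomputable def Um {n : ℕ} (m : Fin n) : (Fin n → ℂ) →L[ℂ] (Fin n → ℂ) :=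
  ContinuousLinearMap.pi (fun j => if j = m then 0 else ContinuousLinearMap.proj j)

lemma Um_apply {n : ℕ} (m : Fin n) (z : Fin n → ℂ) (j : Fin n) :
    Um m z j = if j = m then 0 else z j := by
  simp only [Um, ContinuousLinearMap.pi_apply]
  split <;> simp

lemma update_eq_Um {n : ℕ} (m : Fin n) (z : Fin n → ℂ) (w : ℂ) :
    Function.update z m w = Um m z + Pi.single m w := by
  funext j
  rcases eq_or_ne j m with rfl | hj
  · simp [Um_apply]
  · simp [Um_apply, hj, Function.update_apply]


lemma Um_norm {n : ℕ} (m : Fin n) : ‖Um m‖ ≤ 1 := by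
  refine ContinuousLinearMap.opNorm_le_bound _ zero_le_one (fun z => ?_)
  rw [one_mul]
  refine (pi_norm_le_iff_of_nonneg (norm_nonneg z)).2 (fun j => ?_)
  rw [Um_apply]
  split
  · simp
  · exact norm_le_pi_norm z j


lemma div_lemma {n : ℕ} (m : Fin n) {U : Set (Fin n → ℂ)} (hU : IsOpen U)
    {h : (Fin n → ℂ) → ℂ} (hh : DifferentiableOn ℂ h U)
    {b : Fin n → ℂ} (hbm : b m = 0) {ρ : ℝ} (hρ : 0 < ρ)
    (hsub : closedBall b (4*ρ) ⊆ U) :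
    ∃ c : (Fin n → ℂ) → ℂ, DifferentiableOn ℂ c (ball b ρ) ∧
      ∀ z ∈ ball b ρ, h z = h (Function.update z m 0) + z m * c z := by
  have h4ρ : (0:ℝ) < 4*ρ := by linarith
  have h3ρ : (0:ℝ) < 3*ρ := by linarith
  have hcb3 : closedBall b (3*ρ) ⊆ U := (closedBall_subset_closedBall (by linarith)).trans hsub
  -- membership facts
  have hupd : ∀ z : Fin n → ℂ, dist z b < ρ → ∀ w : ℂ, ‖w‖ ≤ 3*ρ →
      Function.update z m w ∈ closedBall b (3*ρ) := by
    intro z hz w hw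
    rw [mem_closedBall]
    refine (dist_pi_le_iff h3ρ.le).2 (fun j => ?_)
    rcases eq_or_ne j m with rfl | hj
    · simpa [Function.update_self, hbm, Complex.dist_eq] using hw
    · rw [Function.update_of_ne hj]
      exact (dist_le_pi_dist z b j).trans (by linarith)
  have hzm : ∀ z : Fin n → ℂ, dist z b < ρ → ‖z m‖ < ρ := by
    intro z hz
    have := dist_le_pi_dist z b m
    rw [hbm] at this
    simpa [Complex.dist_eq] using lt_of_le_of_lt this hz
  have hwzm : ∀ (z : Fin n → ℂ) (w : ℂ), dist z b < ρ → ‖w‖ = 3*ρ →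
      2*ρ ≤ ‖w - z m‖ := by
    intro z w hz hw
    have h1 := hzm z hz
    have h2 : ‖w‖ - ‖z m‖ ≤ ‖w - z m‖ := by
      simpa using norm_sub_norm_le w (z m)
    rw [hw] at h2; linarith
  have hwzm' : ∀ (z : Fin n → ℂ) (w : ℂ), dist z b < ρ → ‖w‖ = 3*ρ →
      w - z m ≠ 0 := by
    intro z w hz hw hc
    have := hwzm z w hz hw
    rw [hc] at this
    simp at this
    linarith
  -- inner map differentiability / continuity
  have hinner_diff : ∀ (z : Fin n → ℂ), Differentiable ℂ (fun w : ℂ => Function.update z m w) := by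
    intro z
    have : (fun w : ℂ => Function.update z m w)
        = fun w : ℂ => Um m z + w • (Pi.single m (1:ℂ) : Fin n → ℂ) := by
      funext w
      rw [update_eq_Um]
      congr 1
      funext j
      rcases eq_or_ne j m with rfl | hj <;> simp [Pi.single_apply, *]
    rw [this]
    exact (differentiable_id.smul_const _).const_add _
  -- Step A: Cauchy integral representations on ball b ρ
  set R : ℝ := 3*ρ with hR
  have hφ : ∀ z : Fin n → ℂ, dist z b < ρ →
      DiffContOnCl ℂ (fun w : ℂ => h (Function.update z m w)) (ball (0:ℂ) R) := by
    intro z hz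
    have hd : ∀ w : ℂ, w ∈ closedBall (0:ℂ) R →
        DifferentiableAt ℂ (fun w : ℂ => h (Function.update z m w)) w := by
      intro w hw
      rw [mem_closedBall, dist_zero_right] at hw
      have hmem : Function.update z m w ∈ U := hcb3 (hupd z hz w hw)
      exact (hh.differentiableAt (hU.mem_nhds hmem)).comp w (hinner_diff z w)
    refine ⟨fun w hw => (hd w (ball_subset_closedBall hw)).differentiableWithinAt, ?_⟩
    rw [closure_ball (0:ℂ) h3ρ.ne']
    exact fun w hw => (hd w hw).continuousAt.continuousWithinAt
  -- the function c
  set F : (Fin n → ℂ) → ℝ → ℂ := fun z θ =>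
    deriv (circleMap 0 R) θ •
      ((circleMap 0 R θ)⁻¹ * ((circleMap 0 R θ - z m)⁻¹ * h (Function.update z m (circleMap 0 R θ))))
    with hF
  set c : (Fin n → ℂ) → ℂ := fun z => (2 * Real.pi * Complex.I)⁻¹ * ∫ θ in (0:ℝ)..(2*Real.pi), F z θ with hc
  have hcirc : ∀ z : Fin n → ℂ,
      (∮ w in C(0, R), w⁻¹ * ((w - z m)⁻¹ * h (Function.update z m w)))
        = ∫ θ in (0:ℝ)..(2*Real.pi), F z θ := fun z => rfl
  refine ⟨c, ?_, ?_⟩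
  · -- differentiability of c on ball b ρ
    obtain ⟨M, hM⟩ := (isCompact_closedBall b (4*ρ)).exists_bound_of_continuousOn
      (hh.continuousOn.mono hsub)
    have hM0 : 0 ≤ M := le_trans (norm_nonneg _) (hM b (mem_closedBall_self h4ρ.le))
    have hfd : ∀ u ∈ closedBall b R, ‖fderiv ℂ h u‖ ≤ M / ρ := by
      intro u hu
      rw [mem_closedBall] at hu
      refine cauchy_fderiv_bound hU hh hρ ?_ ?_
      · refine (closedBall_subset_closedBall' ?_).trans hsub
        rw [hR] at hu; linarith
      · intro z hzz
        rw [mem_closedBall] at hzz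
        refine hM z ?_
        rw [mem_closedBall]
        have := dist_triangle z u b
        rw [hR] at hu; linarith
    have hwabs : ∀ θ : ℝ, ‖circleMap 0 R θ‖ = R := fun θ => by
      rw [norm_circleMap_zero]; exact abs_of_pos h3ρ
    have hprojnorm : ‖(ContinuousLinearMap.proj m : (Fin n → ℂ) →L[ℂ] ℂ)‖ ≤ 1 := by
      refine ContinuousLinearMap.opNorm_le_bound _ zero_le_one (fun z => ?_)
      rw [one_mul]
      exact norm_le_pi_norm z m
    have hupdC : ∀ x : Fin n → ℂ, Continuous fun θ => Function.update x m (circleMap 0 R θ) := by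
      intro x
      refine continuous_pi (fun j => ?_)
      rcases eq_or_ne j m with rfl | hj
      · simpa [Function.update_self] using continuous_circleMap 0 R
      · simp only [Function.update_of_ne hj]; exact continuous_const
    have hFcont : ∀ x : Fin n → ℂ, dist x b < ρ → Continuous (F x) := by
      intro x hx
      have hcm : Continuous (circleMap 0 R) := continuous_circleMap 0 R
      have hhc : Continuous fun θ => h (Function.update x m (circleMap 0 R θ)) := by
        refine hh.continuousOn.comp_continuous (hupdC x) ?_
        intro θ; exact hcb3 (hupd x hx _ (le_of_eq (hwabs θ)))
      have hne0 : ∀ θ : ℝ, circleMap 0 R θ ≠ 0 := fun θ => circleMap_ne_center h3ρ.ne'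
      have hnez : ∀ θ : ℝ, circleMap 0 R θ - x m ≠ 0 := fun θ => hwzm' x _ hx (hwabs θ)
      have hdc : Continuous fun θ => deriv (circleMap 0 R) θ := by
        simp only [deriv_circleMap]; exact hcm.mul continuous_const
      exact hdc.smul ((hcm.inv₀ hne0).mul (((hcm.sub continuous_const).inv₀ hnez).mul hhc))
    intro x₀ hx₀
    rw [mem_ball] at hx₀
    set δ : ℝ := ρ - dist x₀ b with hδdef
    have hδ0 : 0 < δ := by rw [hδdef]; linarith
    have hballs : ball x₀ δ ⊆ ball b ρ := by
      refine ball_subset_ball' ?_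
      rw [hδdef]; linarith
    set F' : (Fin n → ℂ) → ℝ → (Fin n → ℂ) →L[ℂ] ℂ := fun x θ =>
      deriv (circleMap 0 R) θ •
        ((circleMap 0 R θ)⁻¹ •
          ((circleMap 0 R θ - x m)⁻¹ •
              ((fderiv ℂ h (Function.update x m (circleMap 0 R θ))).comp (Um m))
            + h (Function.update x m (circleMap 0 R θ)) •
              ((-(-1:ℂ) / (circleMap 0 R θ - x m)^2) • ContinuousLinearMap.proj m))) with hF'def
    have hdiff : ∀ θ : ℝ, ∀ x : Fin n → ℂ, dist x b < ρ →
        HasFDerivAt (fun x => F x θ) (F' x θ) x := by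
      intro θ x hx
      have hw := hwabs θ
      have hmemU : Function.update x m (circleMap 0 R θ) ∈ U :=
        hcb3 (hupd x hx _ (le_of_eq hw))
      have hinner : HasFDerivAt (fun z : Fin n → ℂ => Function.update z m (circleMap 0 R θ))
          (Um m) x := by
        have heq : (fun z : Fin n → ℂ => Function.update z m (circleMap 0 R θ))
            = fun z => Um m z + Pi.single m (circleMap 0 R θ) := by
          funext z; exact update_eq_Um m z _
        rw [heq]
        exact (Um m).hasFDerivAt.add_const _
      have hQ : HasFDerivAt (fun z : Fin n → ℂ => h (Function.update z m (circleMap 0 R θ)))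
          ((fderiv ℂ h (Function.update x m (circleMap 0 R θ))).comp (Um m)) x :=
        ((hh.differentiableAt (hU.mem_nhds hmemU)).hasFDerivAt).comp x hinner
      have hP : HasFDerivAt (fun z : Fin n → ℂ => (circleMap 0 R θ - z m)⁻¹)
          ((-(-1:ℂ) / (circleMap 0 R θ - x m)^2) • (ContinuousLinearMap.proj m :
            (Fin n → ℂ) →L[ℂ] ℂ)) x := by
        have hd1 : HasDerivAt (fun t : ℂ => (circleMap 0 R θ - t)⁻¹)
            (-(-1:ℂ) / (circleMap 0 R θ - x m)^2) (x m) := by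
          have h0 : HasDerivAt (fun t : ℂ => circleMap 0 R θ - t) (-1) (x m) := by
            simpa using (hasDerivAt_id (x m)).const_sub (circleMap 0 R θ)
          exact h0.inv (hwzm' x _ hx hw)
        have hproj := (ContinuousLinearMap.proj (R := ℂ) (φ := fun _ : Fin n => ℂ) m).hasFDerivAt (x := x)
        exact hd1.comp_hasFDerivAt (f := fun z : Fin n → ℂ => z m) x hproj
      have hPQ := (hP.mul hQ).const_mul ((circleMap 0 R θ)⁻¹)
      exact hPQ.const_smul (deriv (circleMap 0 R) θ)
    set B : ℝ := R * (R⁻¹ * ((2*ρ)⁻¹ * (M/ρ) + M * (1/(2*ρ)^2 * 1))) with hBdef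
    have hbound : ∀ θ : ℝ, ∀ x : Fin n → ℂ, dist x b < ρ → ‖F' x θ‖ ≤ B := by
      intro θ x hx
      have hw := hwabs θ
      have h2ρ : 2*ρ ≤ ‖circleMap 0 R θ - x m‖ := hwzm x _ hx hw
      have humem : Function.update x m (circleMap 0 R θ) ∈ closedBall b R :=
        hupd x hx _ (le_of_eq hw)
      have e1 : ‖deriv (circleMap 0 R) θ‖ = R := by
        rw [deriv_circleMap, norm_mul, hw]
        simp
      have e2 : ‖(circleMap 0 R θ)⁻¹‖ = R⁻¹ := by
        rw [norm_inv, hw]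
      simp only [hF'def]
      set w : ℂ := circleMap 0 R θ with hwdef
      set u : Fin n → ℂ := Function.update x m w with hudef
      set L1 : (Fin n → ℂ) →L[ℂ] ℂ := (fderiv ℂ h u).comp (Um m) with hL1
      set P : (Fin n → ℂ) →L[ℂ] ℂ := ContinuousLinearMap.proj m with hPdef
      set s1 : ℂ := (w - x m)⁻¹ with hs1
      set s2 : ℂ := -(-1:ℂ)/(w - x m)^2 with hs2
      set Y : (Fin n → ℂ) →L[ℂ] ℂ := s1 • L1 + h u • (s2 • P) with hY
      have e2w : ‖w⁻¹‖ = R⁻¹ := by rw [norm_inv, hw]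
      have eA : ‖deriv (circleMap 0 R) θ • w⁻¹ • Y‖ = ‖deriv (circleMap 0 R) θ‖ * ‖w⁻¹ • Y‖ := by
        exact norm_smul (deriv (circleMap 0 R) θ) (w⁻¹ • Y)
      have eB : ‖w⁻¹ • Y‖ = ‖w⁻¹‖ * ‖Y‖ := by exact norm_smul w⁻¹ Y
      have eC : ‖s1 • L1‖ = ‖s1‖ * ‖L1‖ := by exact norm_smul s1 L1
      have eD : ‖h u • (s2 • P)‖ = ‖h u‖ * ‖s2 • P‖ := by exact norm_smul (h u) (s2 • P)
      have eE : ‖s2 • P‖ = ‖s2‖ * ‖P‖ := by exact norm_smul s2 P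
      rw [eA, eB, e1, e2w, hBdef]
      refine mul_le_mul_of_nonneg_left ?_ h3ρ.le
      refine mul_le_mul_of_nonneg_left ?_ (by positivity)
      rw [hY]
      refine le_trans (norm_add_le _ _) ?_
      rw [eC, eD, eE]
      have c1 : ‖s1‖ ≤ (2*ρ)⁻¹ := by
        rw [hs1, norm_inv]
        exact inv_anti₀ (by linarith) h2ρ
      have c2 : ‖L1‖ ≤ M/ρ := by
        rw [hL1]
        refine le_trans (ContinuousLinearMap.opNorm_comp_le _ _) ?_
        calc ‖fderiv ℂ h u‖ * ‖Um m‖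
            ≤ (M/ρ) * 1 :=
              mul_le_mul (hfd _ humem) (Um_norm m) (norm_nonneg _) (by positivity)
          _ = M/ρ := mul_one _
      have c3 : ‖h u‖ ≤ M :=
        hM _ ((closedBall_subset_closedBall (by rw [hR]; linarith)) humem)
      have c4 : ‖s2‖ ≤ 1/(2*ρ)^2 := by
        rw [hs2, norm_div, norm_neg, norm_neg, norm_one, norm_pow]
        refine div_le_div_of_nonneg_left zero_le_one (by positivity) ?_
        exact pow_le_pow_left₀ (by positivity) h2ρ 2
      refine add_le_add (mul_le_mul c1 c2 (norm_nonneg _) (by positivity)) ?_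
      refine mul_le_mul c3 ?_ (by positivity) hM0
      exact mul_le_mul c4 hprojnorm (norm_nonneg _) (by positivity)
    have hFmeas : ∀ᶠ x in nhds x₀, AEStronglyMeasurable (F x)
        (volume.restrict (Set.uIoc (0:ℝ) (2*Real.pi))) := by
      filter_upwards [isOpen_ball.mem_nhds (mem_ball.2 hx₀)] with x hx
      exact ((hFcont x (mem_ball.1 hx)).aestronglyMeasurable).restrict
    have hF'meas : AEStronglyMeasurable (F' x₀)
        (volume.restrict (Set.uIoc (0:ℝ) (2*Real.pi))) := by
      have hcm : Continuous (circleMap 0 R) := continuous_circleMap 0 R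
      have h1 : Measurable fun θ => fderiv ℂ h (Function.update x₀ m (circleMap 0 R θ)) :=
        (measurable_fderiv ℂ h).comp (hupdC x₀).measurable
      have hcompc : Continuous fun L : (Fin n → ℂ) →L[ℂ] ℂ => L.comp (Um m) := by
        have : (fun L : (Fin n → ℂ) →L[ℂ] ℂ => L.comp (Um m))
            = fun L => ((ContinuousLinearMap.compL ℂ (Fin n → ℂ) (Fin n → ℂ) ℂ).flip (Um m)) L := by
          funext L
          simp [ContinuousLinearMap.flip_apply]
        rw [this]
        exact ((ContinuousLinearMap.compL ℂ (Fin n → ℂ) (Fin n → ℂ) ℂ).flip (Um m)).continuous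
      have h2 : StronglyMeasurable fun θ =>
          (fderiv ℂ h (Function.update x₀ m (circleMap 0 R θ))).comp (Um m) :=
        (hcompc.measurable.comp h1).stronglyMeasurable
      have hhc : Continuous fun θ => h (Function.update x₀ m (circleMap 0 R θ)) := by
        refine hh.continuousOn.comp_continuous (hupdC x₀) ?_
        intro θ; exact hcb3 (hupd x₀ hx₀ _ (le_of_eq (hwabs θ)))
      have hne0 : ∀ θ : ℝ, circleMap 0 R θ ≠ 0 := fun θ => circleMap_ne_center h3ρ.ne'
      have hnez : ∀ θ : ℝ, circleMap 0 R θ - x₀ m ≠ 0 := fun θ => hwzm' x₀ _ hx₀ (hwabs θ)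
      have s1 : StronglyMeasurable fun θ =>
          (circleMap 0 R θ - x₀ m)⁻¹ •
            ((fderiv ℂ h (Function.update x₀ m (circleMap 0 R θ))).comp (Um m)) :=
        (((hcm.sub continuous_const).inv₀ hnez).stronglyMeasurable).smul h2
      have s2 : StronglyMeasurable fun θ =>
          h (Function.update x₀ m (circleMap 0 R θ)) •
            ((-(-1:ℂ) / (circleMap 0 R θ - x₀ m)^2) • (ContinuousLinearMap.proj m :
              (Fin n → ℂ) →L[ℂ] ℂ)) := by
        refine hhc.stronglyMeasurable.smul ?_
        refine Continuous.stronglyMeasurable ?_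
        refine Continuous.fun_smul ?_ continuous_const
        refine Continuous.div continuous_const ?_ ?_
        · exact (hcm.sub continuous_const).pow 2
        · intro θ; exact pow_ne_zero 2 (hnez θ)
      have hdc : Continuous fun θ => deriv (circleMap 0 R) θ := by
        simp only [deriv_circleMap]; exact hcm.mul continuous_const
      refine StronglyMeasurable.aestronglyMeasurable ?_
      refine hdc.stronglyMeasurable.smul ?_
      exact ((hcm.inv₀ hne0).stronglyMeasurable).smul (s1.add s2)
    have hFint : IntervalIntegrable (F x₀) volume 0 (2*Real.pi) :=
      (hFcont x₀ hx₀).intervalIntegrable 0 (2*Real.pi)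
    have hmain := intervalIntegral.hasFDerivAt_integral_of_dominated_of_fderiv_le
      (F := F) (F' := F') (bound := fun _ => B) (ball_mem_nhds x₀ hδ0) hFmeas hFint hF'meas
      (Filter.Eventually.of_forall (fun θ _ x hxδ => hbound θ x (mem_ball.1 (hballs hxδ))))
      intervalIntegrable_const
      (Filter.Eventually.of_forall (fun θ _ x hxδ => hdiff θ x (mem_ball.1 (hballs hxδ))))
    have : DifferentiableAt ℂ c x₀ := by
      rw [hc]
      exact (hmain.differentiableAt).const_mul _
    exact this.differentiableWithinAt
  · -- the identity
    intro z hz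
    rw [mem_ball] at hz
    have hzmem : z m ∈ ball (0:ℂ) R := by
      rw [mem_ball, dist_zero_right]
      have := hzm z hz
      linarith
    have h0mem : (0:ℂ) ∈ ball (0:ℂ) R := by simpa using h3ρ
    have h1 := (hφ z hz).circleIntegral_sub_inv_smul hzmem
    have h2 := (hφ z hz).circleIntegral_sub_inv_smul h0mem
    rw [Function.update_eq_self] at h1
    -- integrability of the two integrands
    have hccont : ContinuousOn (fun w : ℂ => h (Function.update z m w)) (sphere (0:ℂ) R) := by
      intro w hw
      rw [mem_sphere, dist_zero_right] at hw
      have hmem : Function.update z m w ∈ U := hcb3 (hupd z hz w (le_of_eq (by rw[hw])))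
      exact ((hh.differentiableAt (hU.mem_nhds hmem)).comp w (hinner_diff z w)).continuousAt.continuousWithinAt
    have hsne : ∀ w : ℂ, w ∈ sphere (0:ℂ) R → ‖w‖ = 3*ρ := by
      intro w hw
      rw [mem_sphere, dist_zero_right] at hw
      exact hw
    have hint1 : CircleIntegrable (fun w : ℂ => (w - z m)⁻¹ • h (Function.update z m w)) 0 R := by
      refine ContinuousOn.circleIntegrable h3ρ.le ?_
      refine ContinuousOn.fun_smul ?_ hccont
      refine ContinuousOn.inv₀ (by fun_prop) ?_
      exact fun w hw => hwzm' z w hz (hsne w hw)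
    have hint2 : CircleIntegrable (fun w : ℂ => (w - 0)⁻¹ • h (Function.update z m w)) 0 R := by
      refine ContinuousOn.circleIntegrable h3ρ.le ?_
      refine ContinuousOn.fun_smul ?_ hccont
      refine ContinuousOn.inv₀ (by fun_prop) ?_
      intro w hw
      have := hsne w hw
      intro hw0
      rw [sub_zero] at hw0
      rw [hw0] at this
      simp at this; linarith
    have key : z m * (∮ w in C(0, R), w⁻¹ * ((w - z m)⁻¹ * h (Function.update z m w)))
        = (∮ w in C(0, R), (w - z m)⁻¹ • h (Function.update z m w))
          - (∮ w in C(0, R), (w - 0)⁻¹ • h (Function.update z m w)) := by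
      rw [← circleIntegral.integral_sub hint1 hint2]
      have := circleIntegral.integral_smul (𝕜 := ℂ) (z m)
        (fun w => w⁻¹ * ((w - z m)⁻¹ * h (Function.update z m w))) 0 R
      simp only [smul_eq_mul] at this
      rw [← this]
      refine circleIntegral.integral_congr h3ρ.le (fun w hw => ?_)
      have hw3 := hsne w hw
      have hne0 : w ≠ 0 := by
        intro h0; rw [h0] at hw3; simp at hw3; linarith
      have hnez : w - z m ≠ 0 := hwzm' z w hz hw3
      simp only [smul_eq_mul, sub_zero]
      field_simp
      ring
    rw [hcirc] at key
    have hfinal : z m * c z = h z - h (Function.update z m 0) := by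
      rw [hc]
      simp only
      rw [mul_comm (z m), mul_assoc, mul_comm _ (z m), key, h1, h2]
      have hpi : (2 * Real.pi * Complex.I) ≠ 0 := by
        simp [Real.pi_ne_zero, Complex.I_ne_zero, Complex.ofReal_ne_zero]
      simp only [smul_eq_mul]
      field_simp
    linear_combination -hfinal

lemma double_sum_split {M : Type*} [AddCommMonoid M] (q : ℕ) (f : Fin (q+1) → Fin (q+1) → M) :
    (∑ j : Fin (q+1), ∑ k : Fin (q+1), f j k)
      = ((∑ j : Fin q, ∑ k : Fin q, f j.castSucc k.castSucc)
          + ∑ j : Fin q, f j.castSucc (Fin.last q))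
        + ((∑ k : Fin q, f (Fin.last q) k.castSucc) + f (Fin.last q) (Fin.last q)) := by
  rw [Fin.sum_univ_castSucc (f := fun j => ∑ k, f j k)]
  congr 1
  · rw [← Finset.sum_add_distrib]
    exact Finset.sum_congr rfl (fun j _ => Fin.sum_univ_castSucc (fun k => f j.castSucc k))
  · exact Fin.sum_univ_castSucc (fun k => f (Fin.last q) k)

lemma double_sum_eval {M : Type*} [AddCommMonoid M] (q : ℕ) (f : Fin (q+1) → Fin (q+1) → M)
    (h3 : ∀ k, f (Fin.last q) k = 0) :
    (∑ j : Fin (q+1), ∑ k : Fin (q+1), f j k)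
      = (∑ j : Fin q, ∑ k : Fin q, f j.castSucc k.castSucc)
        + ∑ j : Fin q, f j.castSucc (Fin.last q) := by
  rw [double_sum_split q f]
  have hz1 : (∑ k : Fin q, f (Fin.last q) k.castSucc) = 0 :=
    Finset.sum_eq_zero (fun k _ => h3 k.castSucc)
  rw [hz1, h3 (Fin.last q), add_zero, add_zero]


lemma koszul {n : ℕ} : ∀ (q : ℕ) (hqn : q ≤ n) (Vb : Set (Fin n → ℂ)) (b : Fin n → ℂ)
    (g : Fin q → (Fin n → ℂ) → ℂ), IsOpen Vb → b ∈ Vb →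
    (∀ l, DifferentiableOn ℂ (g l) Vb) →
    (∀ z ∈ Vb, ∑ l : Fin q, g l z * z (Fin.castLE hqn l) = 0) →
    ∃ (V : Set (Fin n → ℂ)) (bc : Fin q → Fin q → (Fin n → ℂ) → ℂ),
      IsOpen V ∧ b ∈ V ∧ V ⊆ Vb ∧
      (∀ j k, j < k → DifferentiableOn ℂ (bc j k) V) ∧
      ∀ l : Fin q, ∀ z ∈ V, g l z =
        ∑ j : Fin q, ∑ k : Fin q, if j < k then
          bc j k z * (if l = j then -(z (Fin.castLE hqn k))
            else if l = k then z (Fin.castLE hqn j) else 0) else 0 := by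
  intro q
  induction q with
  | zero =>
    intro hqn Vb b g hV hb hg hrel
    exact ⟨Vb, fun _ _ _ => 0, hV, hb, subset_rfl, fun j k _ => differentiableOn_const 0,
      fun l => l.elim0⟩
  | succ q IH =>
    intro hqn Vb b g hV hb hg hrel
    by_cases hA : ∃ m : Fin (q+1), b (Fin.castLE hqn m) ≠ 0
    · -- CASE A: some coordinate of b is nonzero
      obtain ⟨m, hm⟩ := hA
      refine ⟨Vb ∩ {z | z (Fin.castLE hqn m) ≠ 0},
        fun j k z => if k = m ∧ j < m then -(g j z) / z (Fin.castLE hqn m)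
          else if j = m ∧ m < k then g k z / z (Fin.castLE hqn m) else 0,
        hV.inter (isOpen_compl_singleton.preimage (continuous_apply (Fin.castLE hqn m))),
        ⟨hb, hm⟩, Set.inter_subset_left, ?_, ?_⟩
      · -- differentiability
        intro j k hjk
        beta_reduce
        have hzc : DifferentiableOn ℂ (fun z : Fin n → ℂ => z (Fin.castLE hqn m))
            (Vb ∩ {z | z (Fin.castLE hqn m) ≠ 0}) :=
          (ContinuousLinearMap.proj (R := ℂ)
            (φ := fun _ : Fin n => ℂ) (Fin.castLE hqn m)).differentiable.differentiableOn
        have hne : ∀ z ∈ Vb ∩ {z : Fin n → ℂ | z (Fin.castLE hqn m) ≠ 0},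
            z (Fin.castLE hqn m) ≠ 0 := fun z hz => hz.2
        by_cases h1 : k = m ∧ j < m
        · simp only [if_pos h1, div_eq_mul_inv]
          exact (((hg j).mono Set.inter_subset_left).neg).mul (hzc.inv hne)
        · by_cases h2 : j = m ∧ m < k
          · simp only [if_neg h1, if_pos h2, div_eq_mul_inv]
            exact ((hg k).mono Set.inter_subset_left).mul (hzc.inv hne)
          · simp only [if_neg h1, if_neg h2]
            exact differentiableOn_const 0
      · -- the identity
        intro l z hz
        beta_reduce
        obtain ⟨hzVb, hzmne⟩ := hz
        have hzm : z (Fin.castLE hqn m) ≠ 0 := hzmne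
        have hrelz := hrel z hzVb
        have sum_double : ∀ (a bb : Fin (q+1)) (C : ℂ),
            (∑ j : Fin (q+1), ∑ k : Fin (q+1), if j = a ∧ k = bb then C else 0) = C := by
          intro a bb C
          have hin : ∀ j : Fin (q+1),
              (∑ k : Fin (q+1), if j = a ∧ k = bb then C else 0)
                = if j = a then C else 0 := by
            intro j
            by_cases hj : j = a
            · simp [hj, Finset.sum_ite_eq']
            · simp [hj]
          rw [Finset.sum_congr rfl (fun j _ => hin j)]
          simp [Finset.sum_ite_eq']
        rcases lt_trichotomy l m with hlm | heq | hml
        · -- l < m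
          have hpt : ∀ j k : Fin (q+1),
              (if j < k then
                (if k = m ∧ j < m then -(g j z) / z (Fin.castLE hqn m)
                  else if j = m ∧ m < k then g k z / z (Fin.castLE hqn m) else 0) *
                (if l = j then -(z (Fin.castLE hqn k))
                  else if l = k then z (Fin.castLE hqn j) else 0) else 0)
              = if j = l ∧ k = m then g l z else 0 := by
            intro j k
            by_cases hc : j = l ∧ k = m
            · rcases hc with ⟨hjl, hkm⟩
              rw [hjl, hkm]
              rw [if_pos hlm, if_pos ⟨rfl, hlm⟩, if_pos rfl, if_pos ⟨rfl, rfl⟩]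
              rw [neg_div, neg_mul_neg, div_mul_cancel₀ _ hzm]
            · rw [if_neg hc]
              by_cases hjk : j < k
              · rw [if_pos hjk]
                by_cases hlj : l = j
                · rw [← hlj]
                  have hkm : ¬(k = m ∧ l < m) := fun h => hc ⟨hlj.symm, h.1⟩
                  rw [if_neg hkm, if_neg (fun h : l = m ∧ m < k => (hlm.ne h.1).elim), zero_mul]
                · rw [if_neg hlj]
                  by_cases hlk : l = k
                  · rw [← hlk]
                    have h1 : ¬(l = m ∧ j < m) := fun h => (hlm.ne h.1).elim
                    have h2 : ¬(j = m ∧ m < l) := fun h => (lt_asymm hlm h.2).elim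
                    rw [if_neg h1, if_neg h2, zero_mul]
                  · rw [if_neg hlk, mul_zero]
              · rw [if_neg hjk]
          rw [Finset.sum_congr rfl (fun j _ => Finset.sum_congr rfl (fun k _ => hpt j k)),
            sum_double]
        · -- l = m
          subst heq
          have hpt : ∀ j k : Fin (q+1),
              (if j < k then
                (if k = l ∧ j < l then -(g j z) / z (Fin.castLE hqn l)
                  else if j = l ∧ l < k then g k z / z (Fin.castLE hqn l) else 0) *
                (if l = j then -(z (Fin.castLE hqn k))
                  else if l = k then z (Fin.castLE hqn j) else 0) else 0)
              = (if k = l ∧ j < l then -(g j z * z (Fin.castLE hqn j)) / z (Fin.castLE hqn l) else 0)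
                + (if j = l ∧ l < k then -(g k z * z (Fin.castLE hqn k)) / z (Fin.castLE hqn l) else 0) := by
            intro j k
            by_cases hjk : j < k
            · rw [if_pos hjk]
              by_cases h1 : k = l ∧ j < l
              · rw [if_pos h1, if_pos h1, if_neg (h1.2.ne' : l ≠ j), if_pos h1.1.symm,
                  if_neg (fun h2 : j = l ∧ l < k => h1.2.ne h2.1), add_zero]
                ring
              · rw [if_neg h1]
                by_cases h2 : j = l ∧ l < k
                · rw [if_pos h2, if_pos h2.1.symm, if_neg h1, if_pos h2, zero_add]
                  ring
                · rw [if_neg h2, if_neg h1, if_neg h2, zero_mul, add_zero]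
            · rw [if_neg hjk, if_neg (fun h : k = l ∧ j < l => hjk (by rw [h.1]; exact h.2)),
                if_neg (fun h : j = l ∧ l < k => hjk (by rw [h.1]; exact h.2)), add_zero]
          rw [Finset.sum_congr rfl (fun j _ => Finset.sum_congr rfl (fun k _ => hpt j k))]
          have hsplit : (∑ j : Fin (q+1), ∑ k : Fin (q+1),
              ((if k = l ∧ j < l then -(g j z * z (Fin.castLE hqn j)) / z (Fin.castLE hqn l) else 0)
                + (if j = l ∧ l < k then -(g k z * z (Fin.castLE hqn k)) / z (Fin.castLE hqn l) else 0)))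
              = (∑ j : Fin (q+1), if j < l then -(g j z * z (Fin.castLE hqn j)) / z (Fin.castLE hqn l) else 0)
                + (∑ k : Fin (q+1), if l < k then -(g k z * z (Fin.castLE hqn k)) / z (Fin.castLE hqn l) else 0) := by
            have hin : ∀ j : Fin (q+1),
                (∑ k : Fin (q+1),
                  ((if k = l ∧ j < l then -(g j z * z (Fin.castLE hqn j)) / z (Fin.castLE hqn l) else 0)
                    + (if j = l ∧ l < k then -(g k z * z (Fin.castLE hqn k)) / z (Fin.castLE hqn l) else 0)))
                = (if j < l then -(g j z * z (Fin.castLE hqn j)) / z (Fin.castLE hqn l) else 0)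
                  + (if j = l then (∑ k : Fin (q+1), if l < k then
                      -(g k z * z (Fin.castLE hqn k)) / z (Fin.castLE hqn l) else 0) else 0) := by
              intro j
              rw [Finset.sum_add_distrib]
              congr 1
              · by_cases hj : j < l
                · simp [hj, Finset.sum_ite_eq']
                · simp [hj]
              · by_cases hj : j = l
                · simp [hj]
                · simp [hj]
            rw [Finset.sum_congr rfl (fun j _ => hin j), Finset.sum_add_distrib]
            congr 1
            simp [Finset.sum_ite_eq']
          rw [hsplit]
          have comb : (∑ j : Fin (q+1), if j < l then -(g j z * z (Fin.castLE hqn j)) / z (Fin.castLE hqn l) else 0)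
              + (∑ k : Fin (q+1), if l < k then -(g k z * z (Fin.castLE hqn k)) / z (Fin.castLE hqn l) else 0)
              = (∑ t : Fin (q+1), -(g t z * z (Fin.castLE hqn t)) / z (Fin.castLE hqn l))
                - (-(g l z * z (Fin.castLE hqn l)) / z (Fin.castLE hqn l)) := by
            rw [← Finset.sum_add_distrib]
            have hpt2 : ∀ t : Fin (q+1),
                (if t < l then -(g t z * z (Fin.castLE hqn t)) / z (Fin.castLE hqn l) else 0)
                + (if l < t then -(g t z * z (Fin.castLE hqn t)) / z (Fin.castLE hqn l) else 0)
                = -(g t z * z (Fin.castLE hqn t)) / z (Fin.castLE hqn l)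
                  - (if t = l then -(g t z * z (Fin.castLE hqn t)) / z (Fin.castLE hqn l) else 0) := by
              intro t
              rcases lt_trichotomy t l with h|h|h
              · rw [if_pos h, if_neg (lt_asymm h), if_neg h.ne, add_zero, sub_zero]
              · rw [h]
                rw [if_neg (lt_irrefl l), if_pos rfl]
                ring
              · rw [if_neg (lt_asymm h), if_pos h, if_neg h.ne', zero_add, sub_zero]
            rw [Finset.sum_congr rfl (fun t _ => hpt2 t), Finset.sum_sub_distrib]
            congr 1
            simp [Finset.sum_ite_eq']
          rw [comb]
          have hsum0 : (∑ t : Fin (q+1), -(g t z * z (Fin.castLE hqn t)) / z (Fin.castLE hqn l)) = 0 := by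
            rw [← Finset.sum_div]
            have : (∑ t : Fin (q+1), -(g t z * z (Fin.castLE hqn t)))
                = -(∑ t : Fin (q+1), g t z * z (Fin.castLE hqn t)) := by
              rw [Finset.sum_neg_distrib]
            rw [this, hrelz, neg_zero, zero_div]
          rw [hsum0, zero_sub, neg_div, neg_neg, mul_div_assoc, div_self hzm, mul_one]
        · -- m < l
          have hpt : ∀ j k : Fin (q+1),
              (if j < k then
                (if k = m ∧ j < m then -(g j z) / z (Fin.castLE hqn m)
                  else if j = m ∧ m < k then g k z / z (Fin.castLE hqn m) else 0) *
                (if l = j then -(z (Fin.castLE hqn k))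
                  else if l = k then z (Fin.castLE hqn j) else 0) else 0)
              = if j = m ∧ k = l then g l z else 0 := by
            intro j k
            by_cases hc : j = m ∧ k = l
            · rcases hc with ⟨hjm, hkl⟩
              rw [hjm, hkl]
              rw [if_pos hml, if_neg (fun h : l = m ∧ m < m => lt_irrefl m h.2),
                if_pos ⟨rfl, hml⟩, if_neg (hml.ne' : l ≠ m), if_pos rfl, if_pos ⟨rfl, rfl⟩]
              exact div_mul_cancel₀ _ hzm
            · rw [if_neg hc]
              by_cases hjk : j < k
              · rw [if_pos hjk]
                by_cases hlj : l = j
                · rw [← hlj]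
                  have h1 : ¬(k = m ∧ l < m) := fun h => lt_asymm hml h.2
                  have h2 : ¬(l = m ∧ m < k) := fun h => hml.ne' h.1
                  rw [if_neg h1, if_neg h2, zero_mul]
                · rw [if_neg hlj]
                  by_cases hlk : l = k
                  · rw [← hlk]
                    have h1 : ¬(l = m ∧ j < m) := fun h => hml.ne' h.1
                    have h2 : ¬(j = m ∧ m < l) := fun h => hc ⟨h.1, hlk.symm⟩
                    rw [if_neg h1, if_neg h2, zero_mul]
                  · rw [if_neg hlk, mul_zero]
              · rw [if_neg hjk]
          rw [Finset.sum_congr rfl (fun j _ => Finset.sum_congr rfl (fun k _ => hpt j k)),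
            sum_double]
    · -- CASE B: all coordinates b_1 .. b_{q+1} vanish
      push_neg at hA
      have hqn' : q ≤ n := (Nat.le_succ q).trans hqn
      have hbm' : b (Fin.castLE hqn (Fin.last q)) = 0 := hA (Fin.last q)
      obtain ⟨r, hr0, hrball⟩ := Metric.isOpen_iff.1 hV b hb
      have hρ : 0 < r/5 := by positivity
      set ρ : ℝ := r/5 with hρdef
      have hcb : closedBall b (4*ρ) ⊆ Vb := by
        refine (closedBall_subset_ball ?_).trans hrball
        rw [hρdef]; linarith
      have hdiv : ∀ i : Fin (q+1), ∃ c : (Fin n → ℂ) → ℂ,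
          DifferentiableOn ℂ c (ball b ρ) ∧
          ∀ z ∈ ball b ρ, g i z = g i (Function.update z (Fin.castLE hqn (Fin.last q)) 0)
            + z (Fin.castLE hqn (Fin.last q)) * c z :=
        fun i => div_lemma (Fin.castLE hqn (Fin.last q)) hV (hg i) hbm' hρ hcb
      choose cf hcdiff hcid using hdiv
      have hV₁Vb : ball b ρ ⊆ Vb :=
        (ball_subset_closedBall.trans (closedBall_subset_closedBall (by linarith))).trans hcb
      have hupdmem : ∀ z ∈ ball b ρ,
          Function.update z (Fin.castLE hqn (Fin.last q)) 0 ∈ ball b ρ := by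
        intro z hz
        rw [mem_ball] at *
        refine (dist_pi_lt_iff hρ).2 (fun j => ?_)
        rcases eq_or_ne j (Fin.castLE hqn (Fin.last q)) with rfl | hj
        · rw [Function.update_self, hbm']
          simpa using hρ
        · rw [Function.update_of_ne hj]
          exact lt_of_le_of_lt (dist_le_pi_dist z b j) hz
      have hcoord : ∀ (z : Fin n → ℂ) (l : Fin q),
          z (Fin.castLE hqn (Fin.castSucc l)) = z (Fin.castLE hqn' l) := fun z l => rfl
      have hne_last : ∀ l : Fin q,
          Fin.castLE hqn (Fin.castSucc l) ≠ Fin.castLE hqn (Fin.last q) := by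
        intro l hcon
        have := congrArg Fin.val hcon
        simp only [Fin.coe_castLE, Fin.coe_castSucc, Fin.val_last] at this
        omega
      have hrel' : ∀ z ∈ ball b ρ,
          ∑ l : Fin q, g (Fin.castSucc l) (Function.update z (Fin.castLE hqn (Fin.last q)) 0)
            * z (Fin.castLE hqn' l) = 0 := by
        intro z hz
        have hu := hrel _ (hV₁Vb (hupdmem z hz))
        rw [Fin.sum_univ_castSucc] at hu
        have h1 : Function.update z (Fin.castLE hqn (Fin.last q)) 0
            (Fin.castLE hqn (Fin.last q)) = 0 := Function.update_self _ _ _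
        rw [h1, mul_zero, add_zero] at hu
        have h2 : ∀ l : Fin q,
            g (Fin.castSucc l) (Function.update z (Fin.castLE hqn (Fin.last q)) 0)
              * Function.update z (Fin.castLE hqn (Fin.last q)) 0 (Fin.castLE hqn (Fin.castSucc l))
            = g (Fin.castSucc l) (Function.update z (Fin.castLE hqn (Fin.last q)) 0)
              * z (Fin.castLE hqn' l) := by
          intro l
          rw [Function.update_of_ne (hne_last l)]
          rfl
        rw [Finset.sum_congr rfl (fun l _ => h2 l)] at hu
        exact hu
      have hg' : ∀ l : Fin q, DifferentiableOn ℂ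
          (fun z => g (Fin.castSucc l) (Function.update z (Fin.castLE hqn (Fin.last q)) 0))
          (ball b ρ) := by
        intro l
        have hupdiff : Differentiable ℂ
            (fun z : Fin n → ℂ => Function.update z (Fin.castLE hqn (Fin.last q)) 0) := by
          have heq : (fun z : Fin n → ℂ => Function.update z (Fin.castLE hqn (Fin.last q)) 0)
              = fun z => Um (Fin.castLE hqn (Fin.last q)) z := by
            funext z; rw [update_eq_Um]; simp
          rw [heq]; exact (Um (Fin.castLE hqn (Fin.last q))).differentiable
        exact (hg (Fin.castSucc l)).comp hupdiff.differentiableOn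
          (fun z hz => hV₁Vb (hupdmem z hz))
      obtain ⟨V₂, bc', hV₂o, hbV₂, hV₂V₁, hbc'd, hbc'⟩ :=
        IH hqn' (ball b ρ) b
          (fun l z => g (Fin.castSucc l) (Function.update z (Fin.castLE hqn (Fin.last q)) 0))
          isOpen_ball (mem_ball_self hρ) hg' hrel'
      -- the last function is a combination of the cf's
      have hz0 : ∀ z ∈ ball b ρ, z (Fin.castLE hqn (Fin.last q)) *
          ((∑ l : Fin q, cf (Fin.castSucc l) z * z (Fin.castLE hqn' l))
            + g (Fin.last q) z) = 0 := by
        intro z hz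
        have hu := hrel z (hV₁Vb hz)
        rw [Fin.sum_univ_castSucc] at hu
        have e1 : ∀ l : Fin q, g (Fin.castSucc l) z * z (Fin.castLE hqn (Fin.castSucc l))
            = g (Fin.castSucc l) (Function.update z (Fin.castLE hqn (Fin.last q)) 0)
                * z (Fin.castLE hqn' l)
              + z (Fin.castLE hqn (Fin.last q)) * (cf (Fin.castSucc l) z * z (Fin.castLE hqn' l)) := by
          intro l
          rw [hcid (Fin.castSucc l) z hz, hcoord z l]
          ring
        rw [Finset.sum_congr rfl (fun l _ => e1 l), Finset.sum_add_distrib, hrel' z hz,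
          zero_add, ← Finset.mul_sum] at hu
        linear_combination hu
      have hψcont : ContinuousOn (fun z : Fin n → ℂ =>
          (∑ l : Fin q, cf (Fin.castSucc l) z * z (Fin.castLE hqn' l))
            + g (Fin.last q) z) (ball b ρ) := by
        refine ContinuousOn.add ?_ (((hg (Fin.last q)).continuousOn).mono hV₁Vb)
        refine continuousOn_finset_sum _ (fun l _ => ?_)
        exact ((hcdiff (Fin.castSucc l)).continuousOn).mul (continuous_apply _).continuousOn
      have hpsi0 : ∀ z ∈ ball b ρ,
          (∑ l : Fin q, cf (Fin.castSucc l) z * z (Fin.castLE hqn' l))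
            + g (Fin.last q) z = 0 := by
        intro z hz
        by_cases hzm : z (Fin.castLE hqn (Fin.last q)) = 0
        · have hcontAt : ContinuousAt (fun z : Fin n → ℂ =>
              (∑ l : Fin q, cf (Fin.castSucc l) z * z (Fin.castLE hqn' l))
                + g (Fin.last q) z) z :=
            hψcont.continuousAt (isOpen_ball.mem_nhds hz)
          have hupdcont : Filter.Tendsto
              (fun t : ℂ => Function.update z (Fin.castLE hqn (Fin.last q)) t)
              (nhds 0) (nhds z) := by
            have hco : Continuous
                (fun t : ℂ => Function.update z (Fin.castLE hqn (Fin.last q)) t) := by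
              refine continuous_pi (fun j => ?_)
              rcases eq_or_ne j (Fin.castLE hqn (Fin.last q)) with rfl | hj
              · simpa [Function.update_self] using continuous_id' (X := ℂ)
              · simp only [Function.update_of_ne hj]; exact continuous_const
            have hval : Function.update z (Fin.castLE hqn (Fin.last q)) (0:ℂ) = z := by
              rw [← hzm]; exact Function.update_eq_self _ _
            have := hco.tendsto 0
            rwa [hval] at this
          have h1 : Filter.Tendsto (fun t : ℂ =>
              (∑ l : Fin q, cf (Fin.castSucc l) (Function.update z (Fin.castLE hqn (Fin.last q)) t)
                  * (Function.update z (Fin.castLE hqn (Fin.last q)) t) (Fin.castLE hqn' l))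
                + g (Fin.last q) (Function.update z (Fin.castLE hqn (Fin.last q)) t))
              (nhdsWithin (0:ℂ) {(0:ℂ)}ᶜ)
              (nhds ((∑ l : Fin q, cf (Fin.castSucc l) z * z (Fin.castLE hqn' l))
                + g (Fin.last q) z)) :=
            hcontAt.tendsto.comp (hupdcont.mono_left nhdsWithin_le_nhds)
          have hsmall : ∀ t : ℂ, dist t 0 < ρ →
              Function.update z (Fin.castLE hqn (Fin.last q)) t ∈ ball b ρ := by
            intro t ht
            rw [mem_ball]
            refine (dist_pi_lt_iff hρ).2 (fun j => ?_)
            rcases eq_or_ne j (Fin.castLE hqn (Fin.last q)) with rfl | hj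
            · rw [Function.update_self, hbm']
              simpa using ht
            · rw [Function.update_of_ne hj]
              exact lt_of_le_of_lt (dist_le_pi_dist z b j) (mem_ball.1 hz)
          have h2 : ∀ᶠ t : ℂ in nhdsWithin (0:ℂ) {(0:ℂ)}ᶜ,
              (∑ l : Fin q, cf (Fin.castSucc l) (Function.update z (Fin.castLE hqn (Fin.last q)) t)
                  * (Function.update z (Fin.castLE hqn (Fin.last q)) t) (Fin.castLE hqn' l))
                + g (Fin.last q) (Function.update z (Fin.castLE hqn (Fin.last q)) t) = 0 := by
            have hball : ∀ᶠ t : ℂ in nhdsWithin (0:ℂ) {(0:ℂ)}ᶜ, dist t 0 < ρ :=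
              Filter.Eventually.filter_mono nhdsWithin_le_nhds
                (Metric.eventually_nhds_iff_ball.2 ⟨ρ, hρ, fun t ht => mem_ball.1 ht⟩)
            filter_upwards [hball, self_mem_nhdsWithin] with t ht ht0
            have hmem := hsmall t ht
            have := hz0 _ hmem
            rw [Function.update_self] at this
            rcases mul_eq_zero.1 this with hbad | hgood
            · exact absurd hbad ht0
            · exact hgood
          exact tendsto_nhds_unique h1 ((Filter.tendsto_congr' h2).2 tendsto_const_nhds)
        · have := hz0 z hz
          rcases mul_eq_zero.1 this with hbad | hgood
          · exact absurd hbad hzm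
          · exact hgood
      have hglast : ∀ z ∈ ball b ρ, g (Fin.last q) z
          = -∑ l : Fin q, cf (Fin.castSucc l) z * z (Fin.castLE hqn' l) := by
        intro z hz
        have := hpsi0 z hz
        linear_combination this
      -- assemble
      refine ⟨V₂, fun j k z => if (k:ℕ) = q then -(cf j z)
        else if hjk : (j:ℕ) < q ∧ (k:ℕ) < q then bc' ⟨(j:ℕ), hjk.1⟩ ⟨(k:ℕ), hjk.2⟩ z else 0,
        hV₂o, hbV₂, hV₂V₁.trans hV₁Vb, ?_, ?_⟩
      · intro j k hjk
        beta_reduce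
        by_cases hk : (k:ℕ) = q
        · simp only [if_pos hk]
          exact ((hcdiff j).mono hV₂V₁).neg
        · have hkq : (k:ℕ) < q := lt_of_le_of_ne (Nat.lt_succ_iff.1 k.isLt) hk
          have hjq : (j:ℕ) < q := lt_trans (Fin.lt_def.1 hjk) hkq
          simp only [if_neg hk, dif_pos (⟨hjq, hkq⟩ : (j:ℕ) < q ∧ (k:ℕ) < q)]
          exact hbc'd ⟨(j:ℕ), hjq⟩ ⟨(k:ℕ), hkq⟩ (Fin.mk_lt_mk.2 (Fin.lt_def.1 hjk))
      · -- final identity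
        intro l z hzV₂
        beta_reduce
        have hzV₁ : z ∈ ball b ρ := hV₂V₁ hzV₂
        have hbc1 : ∀ j : Fin q,
            (if ((Fin.last q : Fin (q+1)) : ℕ) = q then -(cf (Fin.castSucc j) z)
              else if hjk : ((Fin.castSucc j : Fin (q+1)) : ℕ) < q ∧ ((Fin.last q : Fin (q+1)) : ℕ) < q
                then bc' ⟨((Fin.castSucc j : Fin (q+1)) : ℕ), hjk.1⟩ ⟨((Fin.last q : Fin (q+1)) : ℕ), hjk.2⟩ z else 0)
            = -(cf (Fin.castSucc j) z) := fun j => if_pos rfl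
        have hbc2 : ∀ j k : Fin q,
            (if ((Fin.castSucc k : Fin (q+1)) : ℕ) = q then -(cf (Fin.castSucc j) z)
              else if hjk : ((Fin.castSucc j : Fin (q+1)) : ℕ) < q ∧ ((Fin.castSucc k : Fin (q+1)) : ℕ) < q
                then bc' ⟨((Fin.castSucc j : Fin (q+1)) : ℕ), hjk.1⟩ ⟨((Fin.castSucc k : Fin (q+1)) : ℕ), hjk.2⟩ z else 0)
            = bc' j k z := by
          intro j k
          have hkq : ((Fin.castSucc k : Fin (q+1)) : ℕ) ≠ q := by
            simp only [Fin.coe_castSucc]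
            exact k.isLt.ne
          have hjq : ((Fin.castSucc j : Fin (q+1)) : ℕ) < q ∧ ((Fin.castSucc k : Fin (q+1)) : ℕ) < q := by
            simp only [Fin.coe_castSucc]
            exact ⟨j.isLt, k.isLt⟩
          rw [if_neg hkq, dif_pos hjq]
          have e1 : (⟨((Fin.castSucc j : Fin (q+1)) : ℕ), hjq.1⟩ : Fin q) = j := Fin.ext (by simp)
          have e2 : (⟨((Fin.castSucc k : Fin (q+1)) : ℕ), hjq.2⟩ : Fin q) = k := Fin.ext (by simp)
          rw [e1, e2]
        induction l using Fin.lastCases with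
        | last =>
          have hT3 : ∀ k : Fin (q+1),
              (if Fin.last q < k then
                (if (k:ℕ) = q then -(cf (Fin.last q) z)
                  else if hjk : ((Fin.last q : Fin (q+1)):ℕ) < q ∧ (k:ℕ) < q
                    then bc' ⟨((Fin.last q : Fin (q+1)):ℕ), hjk.1⟩ ⟨(k:ℕ), hjk.2⟩ z else 0) *
                (if Fin.last q = Fin.last q then -(z (Fin.castLE hqn k))
                  else if Fin.last q = k then z (Fin.castLE hqn (Fin.last q)) else 0) else 0) = 0 :=
            fun k => if_neg (not_lt.2 (Fin.le_last k))
          have hT1 : ∀ j k : Fin q,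
              (if Fin.castSucc j < Fin.castSucc k then
                (if ((Fin.castSucc k : Fin (q+1)):ℕ) = q then -(cf (Fin.castSucc j) z)
                  else if hjk : ((Fin.castSucc j : Fin (q+1)):ℕ) < q ∧ ((Fin.castSucc k : Fin (q+1)):ℕ) < q
                    then bc' ⟨((Fin.castSucc j : Fin (q+1)):ℕ), hjk.1⟩ ⟨((Fin.castSucc k : Fin (q+1)):ℕ), hjk.2⟩ z else 0) *
                (if Fin.last q = Fin.castSucc j then -(z (Fin.castLE hqn (Fin.castSucc k)))
                  else if Fin.last q = Fin.castSucc k then z (Fin.castLE hqn (Fin.castSucc j)) else 0) else 0) = 0 := by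
            intro j k
            by_cases hjk : Fin.castSucc j < Fin.castSucc k
            · rw [if_pos hjk, if_neg ((Fin.castSucc_lt_last j).ne'),
                if_neg ((Fin.castSucc_lt_last k).ne'), mul_zero]
            · rw [if_neg hjk]
          have hT2 : ∀ j : Fin q,
              (if Fin.castSucc j < Fin.last q then
                (if ((Fin.last q : Fin (q+1)):ℕ) = q then -(cf (Fin.castSucc j) z)
                  else if hjk : ((Fin.castSucc j : Fin (q+1)):ℕ) < q ∧ ((Fin.last q : Fin (q+1)):ℕ) < q
                    then bc' ⟨((Fin.castSucc j : Fin (q+1)):ℕ), hjk.1⟩ ⟨((Fin.last q : Fin (q+1)):ℕ), hjk.2⟩ z else 0) *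
                (if Fin.last q = Fin.castSucc j then -(z (Fin.castLE hqn (Fin.last q)))
                  else if Fin.last q = Fin.last q then z (Fin.castLE hqn (Fin.castSucc j)) else 0) else 0)
              = -(cf (Fin.castSucc j) z) * z (Fin.castLE hqn (Fin.castSucc j)) := by
            intro j
            rw [if_pos (Fin.castSucc_lt_last j), hbc1 j,
              if_neg ((Fin.castSucc_lt_last j).ne'), if_pos rfl]
          have total := double_sum_eval q
            (fun j k => if j < k then
              (if (k:ℕ) = q then -(cf j z)
                else if hjk : (j:ℕ) < q ∧ (k:ℕ) < q
                  then bc' ⟨(j:ℕ), hjk.1⟩ ⟨(k:ℕ), hjk.2⟩ z else 0) *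
              (if Fin.last q = j then -(z (Fin.castLE hqn k))
                else if Fin.last q = k then z (Fin.castLE hqn j) else 0) else 0)
            hT3
          have step1 : (∑ j : Fin q, ∑ k : Fin q,
              (fun (j k : Fin (q+1)) => if j < k then
                (if (k:ℕ) = q then -(cf j z)
                  else if hjk : (j:ℕ) < q ∧ (k:ℕ) < q
                    then bc' ⟨(j:ℕ), hjk.1⟩ ⟨(k:ℕ), hjk.2⟩ z else 0) *
                (if Fin.last q = j then -(z (Fin.castLE hqn k))
                  else if Fin.last q = k then z (Fin.castLE hqn j) else 0) else 0)
              j.castSucc k.castSucc) = 0 :=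
            Finset.sum_eq_zero (fun j _ => Finset.sum_eq_zero (fun k _ => hT1 j k))
          have step2 : (∑ j : Fin q,
              (fun (j k : Fin (q+1)) => if j < k then
                (if (k:ℕ) = q then -(cf j z)
                  else if hjk : (j:ℕ) < q ∧ (k:ℕ) < q
                    then bc' ⟨(j:ℕ), hjk.1⟩ ⟨(k:ℕ), hjk.2⟩ z else 0) *
                (if Fin.last q = j then -(z (Fin.castLE hqn k))
                  else if Fin.last q = k then z (Fin.castLE hqn j) else 0) else 0)
              j.castSucc (Fin.last q))
              = ∑ j : Fin q, -(cf (Fin.castSucc j) z) * z (Fin.castLE hqn (Fin.castSucc j)) :=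
            Finset.sum_congr rfl (fun j _ => hT2 j)
          rw [step1, step2, zero_add] at total
          have value : g (Fin.last q) z
              = ∑ j : Fin q, -(cf (Fin.castSucc j) z) * z (Fin.castLE hqn (Fin.castSucc j)) := by
            rw [hglast z hzV₁, ← Finset.sum_neg_distrib]
            exact Finset.sum_congr rfl (fun t _ => (neg_mul _ _).symm)
          exact value.trans total.symm
        | cast l₀ =>
          have key := hbc' l₀ z hzV₂
          have hT3 : ∀ k : Fin (q+1),
              (if Fin.last q < k then
                (if (k:ℕ) = q then -(cf (Fin.last q) z)
                  else if hjk : ((Fin.last q : Fin (q+1)):ℕ) < q ∧ (k:ℕ) < q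
                    then bc' ⟨((Fin.last q : Fin (q+1)):ℕ), hjk.1⟩ ⟨(k:ℕ), hjk.2⟩ z else 0) *
                (if Fin.castSucc l₀ = Fin.last q then -(z (Fin.castLE hqn k))
                  else if Fin.castSucc l₀ = k then z (Fin.castLE hqn (Fin.last q)) else 0) else 0) = 0 :=
            fun k => if_neg (not_lt.2 (Fin.le_last k))
          have hT1 : ∀ j k : Fin q,
              (if Fin.castSucc j < Fin.castSucc k then
                (if ((Fin.castSucc k : Fin (q+1)):ℕ) = q then -(cf (Fin.castSucc j) z)
                  else if hjk : ((Fin.castSucc j : Fin (q+1)):ℕ) < q ∧ ((Fin.castSucc k : Fin (q+1)):ℕ) < q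
                    then bc' ⟨((Fin.castSucc j : Fin (q+1)):ℕ), hjk.1⟩ ⟨((Fin.castSucc k : Fin (q+1)):ℕ), hjk.2⟩ z else 0) *
                (if Fin.castSucc l₀ = Fin.castSucc j then -(z (Fin.castLE hqn (Fin.castSucc k)))
                  else if Fin.castSucc l₀ = Fin.castSucc k then z (Fin.castLE hqn (Fin.castSucc j)) else 0) else 0)
              = (if j < k then bc' j k z * (if l₀ = j then -(z (Fin.castLE hqn' k))
                  else if l₀ = k then z (Fin.castLE hqn' j) else 0) else 0) := by
            intro j k
            by_cases hjk : j < k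
            · rw [if_pos (Fin.castSucc_lt_castSucc_iff.2 hjk), if_pos hjk, hbc2 j k]
              congr 1
              by_cases h1 : l₀ = j
              · rw [if_pos (by rw [h1] : Fin.castSucc l₀ = Fin.castSucc j), if_pos h1]
                rfl
              · rw [if_neg (fun h => h1 (Fin.castSucc_inj.1 h)), if_neg h1]
                by_cases h2 : l₀ = k
                · rw [if_pos (by rw [h2] : Fin.castSucc l₀ = Fin.castSucc k), if_pos h2]
                  rfl
                · rw [if_neg (fun h => h2 (Fin.castSucc_inj.1 h)), if_neg h2]
            · rw [if_neg (fun h => hjk (Fin.castSucc_lt_castSucc_iff.1 h)), if_neg hjk]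
          have hT2 : ∀ j : Fin q,
              (if Fin.castSucc j < Fin.last q then
                (if ((Fin.last q : Fin (q+1)):ℕ) = q then -(cf (Fin.castSucc j) z)
                  else if hjk : ((Fin.castSucc j : Fin (q+1)):ℕ) < q ∧ ((Fin.last q : Fin (q+1)):ℕ) < q
                    then bc' ⟨((Fin.castSucc j : Fin (q+1)):ℕ), hjk.1⟩ ⟨((Fin.last q : Fin (q+1)):ℕ), hjk.2⟩ z else 0) *
                (if Fin.castSucc l₀ = Fin.castSucc j then -(z (Fin.castLE hqn (Fin.last q)))
                  else if Fin.castSucc l₀ = Fin.last q then z (Fin.castLE hqn (Fin.castSucc j)) else 0) else 0)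
              = (if l₀ = j then cf (Fin.castSucc l₀) z * z (Fin.castLE hqn (Fin.last q)) else 0) := by
            intro j
            rw [if_pos (Fin.castSucc_lt_last j), hbc1 j]
            by_cases hlj : l₀ = j
            · rw [if_pos (by rw [hlj] : Fin.castSucc l₀ = Fin.castSucc j), if_pos hlj, hlj,
                neg_mul_neg]
            · rw [if_neg (fun h => hlj (Fin.castSucc_inj.1 h)), if_neg hlj,
                if_neg ((Fin.castSucc_lt_last l₀).ne), mul_zero]
          have total := double_sum_eval q
            (fun j k => if j < k then
              (if (k:ℕ) = q then -(cf j z)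
                else if hjk : (j:ℕ) < q ∧ (k:ℕ) < q
                  then bc' ⟨(j:ℕ), hjk.1⟩ ⟨(k:ℕ), hjk.2⟩ z else 0) *
              (if Fin.castSucc l₀ = j then -(z (Fin.castLE hqn k))
                else if Fin.castSucc l₀ = k then z (Fin.castLE hqn j) else 0) else 0)
            hT3
          have step1 : (∑ j : Fin q, ∑ k : Fin q,
              (fun (j k : Fin (q+1)) => if j < k then
                (if (k:ℕ) = q then -(cf j z)
                  else if hjk : (j:ℕ) < q ∧ (k:ℕ) < q
                    then bc' ⟨(j:ℕ), hjk.1⟩ ⟨(k:ℕ), hjk.2⟩ z else 0) *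
                (if Fin.castSucc l₀ = j then -(z (Fin.castLE hqn k))
                  else if Fin.castSucc l₀ = k then z (Fin.castLE hqn j) else 0) else 0)
              j.castSucc k.castSucc)
              = g (Fin.castSucc l₀) (Function.update z (Fin.castLE hqn (Fin.last q)) 0) := by
            refine Eq.trans ?_ (key.symm)
            exact Finset.sum_congr rfl (fun j _ => Finset.sum_congr rfl (fun k _ => hT1 j k))
          have step2 : (∑ j : Fin q,
              (fun (j k : Fin (q+1)) => if j < k then
                (if (k:ℕ) = q then -(cf j z)
                  else if hjk : (j:ℕ) < q ∧ (k:ℕ) < q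
                    then bc' ⟨(j:ℕ), hjk.1⟩ ⟨(k:ℕ), hjk.2⟩ z else 0) *
                (if Fin.castSucc l₀ = j then -(z (Fin.castLE hqn k))
                  else if Fin.castSucc l₀ = k then z (Fin.castLE hqn j) else 0) else 0)
              j.castSucc (Fin.last q))
              = cf (Fin.castSucc l₀) z * z (Fin.castLE hqn (Fin.last q)) := by
            refine Eq.trans (Finset.sum_congr rfl (fun j _ => hT2 j)) ?_
            rw [Finset.sum_ite_eq]
            exact if_pos (Finset.mem_univ l₀)
          rw [step1, step2] at total
          have value : g (Fin.castSucc l₀) z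
              = g (Fin.castSucc l₀) (Function.update z (Fin.castLE hqn (Fin.last q)) 0)
                + cf (Fin.castSucc l₀) z * z (Fin.castLE hqn (Fin.last q)) := by
            rw [hcid (Fin.castSucc l₀) z hzV₁]
            ring
          exact value.trans total.symm


/-- On a polydisc centered at 0, for `σ_j = z_j` (`1 ≤ j ≤ q`) and
`σ_i = Σ_j a_{ij} z_j` (`q+1 ≤ i ≤ N`), every local relation `Σ f_j σ_j = 0` is a
holomorphic linear combination of the trivial solutions `τ_{jk}` (`1 ≤ j < k ≤ q`)
and the tuples `φ_i` (`q+1 ≤ i ≤ N`), with the coefficients of the `φ_i` being the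
`f_i` themselves. -/
theorem stmt_4 (n q N : ℕ) (hq1 : 1 ≤ q) (hqn : q ≤ n) (hqN : q ≤ N)
    (r : Fin n → ℝ) (hr : ∀ j, 0 < r j)
    (a : Fin N → Fin q → (Fin n → ℂ) → ℂ)
    (ha : ∀ i j, DifferentiableOn ℂ (a i j) {z | ∀ j, ‖z j‖ < r j})
    (σ : Fin N → (Fin n → ℂ) → ℂ)
    (hσ1 : ∀ (i : Fin N) (h : (i : ℕ) < q), ∀ z : Fin n → ℂ,
      σ i z = z ⟨(i : ℕ), lt_of_lt_of_le h hqn⟩)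
    (hσ2 : ∀ i : Fin N, q ≤ (i : ℕ) → ∀ z ∈ {z : Fin n → ℂ | ∀ j, ‖z j‖ < r j},
      σ i z = ∑ j : Fin q, a i j z * z (Fin.castLE hqn j)) :
    ∀ b ∈ {z : Fin n → ℂ | ∀ j, ‖z j‖ < r j},
    ∀ (Vb : Set (Fin n → ℂ)) (f : Fin N → (Fin n → ℂ) → ℂ),
      IsOpen Vb → b ∈ Vb → Vb ⊆ {z : Fin n → ℂ | ∀ j, ‖z j‖ < r j} →
      (∀ j, DifferentiableOn ℂ (f j) Vb) →
      (∀ z ∈ Vb, ∑ j : Fin N, f j z * σ j z = 0) →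
      ∃ (V : Set (Fin n → ℂ)) (bc : Fin q → Fin q → (Fin n → ℂ) → ℂ),
        IsOpen V ∧ b ∈ V ∧ V ⊆ Vb ∧
        (∀ j k : Fin q, j < k → DifferentiableOn ℂ (bc j k) V) ∧
        ∀ l : Fin N, ∀ z ∈ V,
          f l z =
            (∑ j : Fin q, ∑ k : Fin q,
              if j < k then
                bc j k z *
                  (if (l : ℕ) = (j : ℕ) then -σ (Fin.castLE hqN k) z
                   else if (l : ℕ) = (k : ℕ) then σ (Fin.castLE hqN j) z else 0)
              else 0)
            + ∑ i : Fin N,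
                if q ≤ (i : ℕ) then
                  f i z *
                    (if hl : (l : ℕ) < q then -(a i ⟨(l : ℕ), hl⟩ z)
                     else if l = i then 1 else 0)
                else 0 := by
  intro b hbPD Vb f hVb hbVb hVbPD hf hrelf
  -- differentiability of the auxiliary functions g
  have hgdiff : ∀ l : Fin q, DifferentiableOn ℂ
      (fun z => f (Fin.castLE hqN l) z
        + ∑ i : Fin N, (if q ≤ (i:ℕ) then f i z * a i l z else 0)) Vb := by
    intro l
    refine DifferentiableOn.add (hf (Fin.castLE hqN l)) ?_
    refine DifferentiableOn.fun_sum (fun i _ => ?_)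
    by_cases hi : q ≤ (i:ℕ)
    · simp only [if_pos hi]
      exact (hf i).mul ((ha i l).mono hVbPD)
    · simp only [if_neg hi]
      exact differentiableOn_const 0
  -- the relation for the g's
  have hσcast : ∀ (k : Fin q) (z : Fin n → ℂ),
      σ (Fin.castLE hqN k) z = z (Fin.castLE hqn k) :=
    fun k z => hσ1 (Fin.castLE hqN k) k.isLt z
  have hgrel : ∀ z ∈ Vb, ∑ l : Fin q,
      (fun z => f (Fin.castLE hqN l) z
        + ∑ i : Fin N, (if q ≤ (i:ℕ) then f i z * a i l z else 0)) z
      * z (Fin.castLE hqn l) = 0 := by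
    intro z hz
    have hrelz := hrelf z hz
    have hsplit : ∀ j : Fin N, f j z * σ j z
        = (if (j:ℕ) < q then f j z * σ j z else 0)
          + (if q ≤ (j:ℕ) then f j z * σ j z else 0) := by
      intro j
      by_cases hj : (j:ℕ) < q
      · rw [if_pos hj, if_neg (not_le.2 hj), add_zero]
      · rw [if_neg hj, if_pos (not_lt.1 hj), zero_add]
    rw [Finset.sum_congr rfl (fun j _ => hsplit j), Finset.sum_add_distrib] at hrelz
    have hmap : Finset.filter (fun j : Fin N => (j:ℕ) < q) Finset.univ
        = Finset.map (Fin.castLEEmb hqN) Finset.univ := by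
      ext j
      simp only [Finset.mem_filter, Finset.mem_univ, true_and, Finset.mem_map]
      constructor
      · intro hj
        exact ⟨⟨(j:ℕ), hj⟩, Fin.ext rfl⟩
      · rintro ⟨l, rfl⟩
        simpa using l.isLt
    have h1 : (∑ j : Fin N, if (j:ℕ) < q then f j z * σ j z else 0)
        = ∑ l : Fin q, f (Fin.castLE hqN l) z * z (Fin.castLE hqn l) := by
      rw [← Finset.sum_filter, hmap, Finset.sum_map]
      exact Finset.sum_congr rfl (fun l _ => by rw [Fin.castLEEmb_apply, hσcast l z])
    have h3 : (∑ j : Fin N, if q ≤ (j:ℕ) then f j z * σ j z else 0)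
        = ∑ j : Fin N, (if q ≤ (j:ℕ)
            then ∑ l : Fin q, f j z * a j l z * z (Fin.castLE hqn l) else 0) := by
      refine Finset.sum_congr rfl (fun j _ => ?_)
      by_cases hj : q ≤ (j:ℕ)
      · rw [if_pos hj, if_pos hj, hσ2 j hj z (hVbPD hz), Finset.mul_sum]
        exact Finset.sum_congr rfl (fun l _ => by ring)
      · rw [if_neg hj, if_neg hj]
    have expand : ∀ l : Fin q,
        (f (Fin.castLE hqN l) z
          + ∑ i : Fin N, (if q ≤ (i:ℕ) then f i z * a i l z else 0))
          * z (Fin.castLE hqn l)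
        = f (Fin.castLE hqN l) z * z (Fin.castLE hqn l)
          + ∑ i : Fin N, (if q ≤ (i:ℕ) then f i z * a i l z * z (Fin.castLE hqn l) else 0) := by
      intro l
      rw [add_mul, Finset.sum_mul]
      congr 1
      refine Finset.sum_congr rfl (fun i _ => ?_)
      by_cases hi : q ≤ (i:ℕ)
      · rw [if_pos hi, if_pos hi]
      · rw [if_neg hi, if_neg hi, zero_mul]
    calc (∑ l : Fin q,
        (f (Fin.castLE hqN l) z
          + ∑ i : Fin N, (if q ≤ (i:ℕ) then f i z * a i l z else 0))
          * z (Fin.castLE hqn l))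
        = (∑ l : Fin q, f (Fin.castLE hqN l) z * z (Fin.castLE hqn l))
          + ∑ l : Fin q, ∑ i : Fin N,
              (if q ≤ (i:ℕ) then f i z * a i l z * z (Fin.castLE hqn l) else 0) := by
          rw [Finset.sum_congr rfl (fun l _ => expand l), Finset.sum_add_distrib]
      _ = (∑ j : Fin N, if (j:ℕ) < q then f j z * σ j z else 0)
          + ∑ j : Fin N, (if q ≤ (j:ℕ) then f j z * σ j z else 0) := by
          congr 1
          · exact h1.symm
          · rw [h3, Finset.sum_comm]
            refine Finset.sum_congr rfl (fun i _ => ?_)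
            by_cases hi : q ≤ (i:ℕ)
            · simp only [if_pos hi]
            · simp only [if_neg hi, Finset.sum_const_zero]
      _ = 0 := hrelz
  obtain ⟨V, bc, hVo, hbV, hVVb, hbcd, hbcid⟩ :=
    koszul q hqn Vb b
      (fun l z => f (Fin.castLE hqN l) z
        + ∑ i : Fin N, (if q ≤ (i:ℕ) then f i z * a i l z else 0))
      hVb hbVb hgdiff hgrel
  refine ⟨V, bc, hVo, hbV, hVVb, hbcd, ?_⟩
  intro l z hzV
  by_cases hl : (l:ℕ) < q
  · -- l < q
    have hkey := hbcid ⟨(l:ℕ), hl⟩ z hzV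
    have hE : ∀ j k : Fin q,
        (if (l : ℕ) = (j : ℕ) then -σ (Fin.castLE hqN k) z
          else if (l : ℕ) = (k : ℕ) then σ (Fin.castLE hqN j) z else 0)
        = (if (⟨(l:ℕ), hl⟩ : Fin q) = j then -(z (Fin.castLE hqn k))
          else if (⟨(l:ℕ), hl⟩ : Fin q) = k then z (Fin.castLE hqn j) else 0) := by
      intro j k
      by_cases h1 : (⟨(l:ℕ), hl⟩ : Fin q) = j
      · rw [if_pos (congrArg Fin.val h1), if_pos h1, hσcast k z]
      · rw [if_neg (fun h => h1 (Fin.ext h)), if_neg h1]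
        by_cases h2 : (⟨(l:ℕ), hl⟩ : Fin q) = k
        · rw [if_pos (congrArg Fin.val h2), if_pos h2, hσcast j z]
        · rw [if_neg (fun h => h2 (Fin.ext h)), if_neg h2]
    have E1 : (∑ j : Fin q, ∑ k : Fin q,
        if j < k then
          bc j k z *
            (if (l : ℕ) = (j : ℕ) then -σ (Fin.castLE hqN k) z
             else if (l : ℕ) = (k : ℕ) then σ (Fin.castLE hqN j) z else 0)
        else 0)
        = f l z + ∑ i : Fin N, (if q ≤ (i:ℕ) then f i z * a i ⟨(l:ℕ), hl⟩ z else 0) := by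
      refine Eq.trans ?_ hkey.symm
      refine Finset.sum_congr rfl (fun j _ => Finset.sum_congr rfl (fun k _ => ?_))
      by_cases hjk : j < k
      · rw [if_pos hjk, if_pos hjk, hE j k]
      · rw [if_neg hjk, if_neg hjk]
    have E2 : (∑ i : Fin N,
        if q ≤ (i : ℕ) then
          f i z *
            (if hl' : (l : ℕ) < q then -(a i ⟨(l : ℕ), hl'⟩ z)
             else if l = i then 1 else 0)
        else 0)
        = ∑ i : Fin N, (if q ≤ (i:ℕ) then f i z * -(a i ⟨(l:ℕ), hl⟩ z) else 0) := by
      refine Finset.sum_congr rfl (fun i _ => ?_)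
      by_cases hi : q ≤ (i:ℕ)
      · rw [if_pos hi, if_pos hi, dif_pos hl]
      · rw [if_neg hi, if_neg hi]
    rw [E1, E2]
    have hz : (∑ i : Fin N, (if q ≤ (i:ℕ) then f i z * a i ⟨(l:ℕ), hl⟩ z else 0))
        + (∑ i : Fin N, (if q ≤ (i:ℕ) then f i z * -(a i ⟨(l:ℕ), hl⟩ z) else 0)) = 0 := by
      rw [← Finset.sum_add_distrib]
      refine Finset.sum_eq_zero (fun i _ => ?_)
      by_cases hi : q ≤ (i:ℕ)
      · rw [if_pos hi, if_pos hi]; ring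
      · rw [if_neg hi, if_neg hi, add_zero]
    rw [add_assoc, hz, add_zero]
  · -- q ≤ l
    have hql : q ≤ (l:ℕ) := not_lt.1 hl
    have E1 : (∑ j : Fin q, ∑ k : Fin q,
        if j < k then
          bc j k z *
            (if (l : ℕ) = (j : ℕ) then -σ (Fin.castLE hqN k) z
             else if (l : ℕ) = (k : ℕ) then σ (Fin.castLE hqN j) z else 0)
        else 0) = 0 := by
      refine Finset.sum_eq_zero (fun j _ => Finset.sum_eq_zero (fun k _ => ?_))
      have hj : ¬((l : ℕ) = (j : ℕ)) := by have := j.isLt; omega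
      have hk : ¬((l : ℕ) = (k : ℕ)) := by have := k.isLt; omega
      by_cases hjk : j < k
      · rw [if_pos hjk, if_neg hj, if_neg hk, mul_zero]
      · rw [if_neg hjk]
    have E2 : (∑ i : Fin N,
        if q ≤ (i : ℕ) then
          f i z *
            (if hl' : (l : ℕ) < q then -(a i ⟨(l : ℕ), hl'⟩ z)
             else if l = i then 1 else 0)
        else 0) = f l z := by
      have hpt : ∀ i : Fin N,
          (if q ≤ (i : ℕ) then
            f i z *
              (if hl' : (l : ℕ) < q then -(a i ⟨(l : ℕ), hl'⟩ z)
               else if l = i then 1 else 0)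
          else 0) = if i = l then f i z else 0 := by
        intro i
        rw [dif_neg hl]
        by_cases hli : l = i
        · rw [if_pos (hli ▸ hql), if_pos hli, mul_one, if_pos hli.symm]
        · rw [if_neg hli, mul_zero, ite_self, if_neg (fun h => hli h.symm)]
      rw [Finset.sum_congr rfl (fun i _ => hpt i), Finset.sum_ite_eq']
      exact if_pos (Finset.mem_univ l)
    rw [E1, E2, zero_add]
end

section
/- (Cousin decomposition.) Let F ⊆ ℂ^{n−1} be a closed cuboid, let T > δ > 0 and θ ≥ 0, and let φ be holomorphic on an open neighborhood of F × {z_n ∈ ℂ : |Re z_n| ≤ δ, |Im z_n| ≤ θ + δ}. Set E₁ = F × {z_n : −T ≤ Re z_n ≤ δ, |Im z_n| ≤ θ} and E₂ = F × {z_n : −δ ≤ Re z_n ≤ T, |Im z_n| ≤ θ}. Then there exist Φ₁ holomorphic on an open neighborhood of E₁ and Φ₂ holomorphic on an open neighborhood of E₂ such that Φ₁(z′, z_n) − Φ₂(z′, z_n) = φ(z′, z_n) for all (z′, z_n) in a neighborhood of E₁ ∩ E₂. -/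
open Metric Set Complex MeasureTheory intervalIntegral
open scoped Real Interval


lemma fderiv_bound {G : Type*} [NormedAddCommGroup G] [NormedSpace ℂ G] [ProperSpace G]
    {U : Set G} (hU : IsOpen U) {φ : G → ℂ} (hφ : DifferentiableOn ℂ φ U)
    {K : Set G} (hK : IsCompact K) (hKU : K ⊆ U) :
    ∃ C : ℝ, 0 ≤ C ∧ ∀ p ∈ K, ‖fderiv ℂ φ p‖ ≤ C := by
  obtain ⟨r, hr, hrU⟩ := hK.exists_thickening_subset_open hU hKU
  have hr2 : (0:ℝ) < r / 2 := by positivity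
  have hcth : Metric.cthickening (r / 2) K ⊆ U :=
    (Metric.cthickening_subset_thickening' hr (by linarith) K).trans hrU
  have hK' : IsCompact (Metric.cthickening (r / 2) K) :=
    Metric.isCompact_of_isClosed_isBounded Metric.isClosed_cthickening
      (hK.isBounded.cthickening)
  obtain ⟨M, hM⟩ := hK'.exists_bound_of_continuousOn (hφ.continuousOn.mono hcth)
  set M' : ℝ := max M 0 with hM'def
  have hM'0 : 0 ≤ M' := le_max_right _ _
  refine ⟨M' / (r / 2), by positivity, fun p hp => ?_⟩
  have hpU : p ∈ U := hKU hp
  refine ContinuousLinearMap.opNorm_le_bound _ (by positivity) fun u => ?_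
  rcases eq_or_ne u 0 with rfl | hu
  · simp
  · have hun : ((‖u‖ : ℂ)) ≠ 0 := by
      simpa using norm_ne_zero_iff.2 hu
    set e : G := (‖u‖ : ℂ)⁻¹ • u with he
    have hne : ‖e‖ = 1 := by
      rw [he, norm_smul, norm_inv]
      simp [norm_ne_zero_iff.2 hu]
    set ψ : ℂ → ℂ := fun ζ => φ (p + ζ • e) with hψ
    have hmem : ∀ ζ : ℂ, ‖ζ‖ ≤ r / 2 → p + ζ • e ∈ Metric.cthickening (r / 2) K := by
      intro ζ hζ
      apply Metric.mem_cthickening_of_dist_le _ p _ _ hp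
      rw [dist_eq_norm]
      simpa [norm_smul, hne] using hζ
    have hψd : DifferentiableOn ℂ ψ (closedBall 0 (r / 2)) := by
      intro ζ hζ
      have : p + ζ • e ∈ U := hcth (hmem ζ (by simpa [Metric.mem_closedBall, dist_eq_norm] using hζ))
      exact ((hφ.differentiableAt (hU.mem_nhds this)).comp ζ
        (((differentiableAt_id).smul_const e).const_add p)).differentiableWithinAt
    have hd0 : HasDerivAt ψ (fderiv ℂ φ p e) 0 := by
      have h1 : HasFDerivAt φ (fderiv ℂ φ p) (p + (0:ℂ) • e) := by
        simpa using (hφ.differentiableAt (hU.mem_nhds hpU)).hasFDerivAt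
      have h2 : HasDerivAt (fun ζ : ℂ => p + ζ • e) e 0 := by
        simpa using ((hasDerivAt_id (0:ℂ)).smul_const e).const_add p
      have := h1.comp_hasDerivAt 0 h2
      simpa [hψ, Function.comp_def] using this
    have hb : ‖deriv ψ 0‖ ≤ M' / (r / 2) := by
      apply Complex.norm_deriv_le_of_forall_mem_sphere_norm_le hr2
      · exact DifferentiableOn.diffContOnCl (by rwa [closure_ball 0 hr2.ne'])
      · intro ζ hζ
        have : ‖ζ‖ ≤ r / 2 := by simpa [mem_sphere_iff_norm] using hζ.le
        exact le_trans (hM _ (hmem ζ this)) (le_max_left _ _)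
    have hde : deriv ψ 0 = fderiv ℂ φ p e := hd0.deriv
    have hueq : u = (‖u‖ : ℂ) • e := by
      rw [he, smul_smul, mul_inv_cancel₀ hun, one_smul]
    calc ‖fderiv ℂ φ p u‖ = ‖(‖u‖ : ℂ) • fderiv ℂ φ p e‖ := by
          rw [← (fderiv ℂ φ p).map_smul, ← hueq]
      _ = ‖u‖ * ‖fderiv ℂ φ p e‖ := by rw [norm_smul]; simp
      _ ≤ ‖u‖ * (M' / (r / 2)) := by
          apply mul_le_mul_of_nonneg_left _ (norm_nonneg u)
          rw [← hde]; exact hb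
      _ = M' / (r / 2) * ‖u‖ := mul_comm _ _



-- FTC helper for horizontal segments
lemma horiz_int {c : ℝ} {w : ℂ} (hc : c - w.im ≠ 0) (a b : ℝ) :
    ∫ x : ℝ in a..b, ((x : ℂ) + (c : ℝ) * I - w)⁻¹ =
      Complex.log ((b : ℂ) + (c : ℝ) * I - w) - Complex.log ((a : ℂ) + (c : ℝ) * I - w) := by
  have him : ∀ x : ℝ, ((x : ℂ) + (c : ℝ) * I - w).im = c - w.im := by intro x; simp
  have hne : ∀ x : ℝ, ((x : ℂ) + (c : ℝ) * I - w) ≠ 0 := by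
    intro x h; apply hc; rw [← him x, h]; simp
  apply intervalIntegral.integral_eq_sub_of_hasDerivAt
  · intro x hx
    have hslit : ((x : ℂ) + (c : ℝ) * I - w) ∈ Complex.slitPlane := by
      rw [Complex.mem_slitPlane_iff]; right; rw [him]; exact hc
    have hinner : HasDerivAt (fun ζ : ℂ => ζ + (c : ℝ) * I - w) 1 (x : ℂ) :=
      ((hasDerivAt_id _).add_const _).sub_const _
    have := ((Complex.hasDerivAt_log hslit).comp (x : ℂ) hinner).comp_ofReal
    simpa using this
  · apply ContinuousOn.intervalIntegrable
    exact (((Complex.continuous_ofReal.add continuous_const).sub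
      continuous_const).continuousOn).inv₀ fun x _ => hne x

-- FTC helper for right vertical segment
lemma vert_int_right {c : ℝ} {w : ℂ} (hc : 0 < c - w.re) (a b : ℝ) :
    I • (∫ y : ℝ in a..b, ((c : ℂ) + (y : ℂ) * I - w)⁻¹) =
      Complex.log ((c : ℂ) + (b : ℝ) * I - w) - Complex.log ((c : ℂ) + (a : ℝ) * I - w) := by
  have hre : ∀ y : ℝ, ((c : ℂ) + (y : ℂ) * I - w).re = c - w.re := by intro y; simp
  have hne : ∀ y : ℝ, ((c : ℂ) + (y : ℂ) * I - w) ≠ 0 := by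
    intro y h
    have := hre y; rw [h] at this; simp at this; linarith
  have hcont : ContinuousOn (fun y : ℝ => ((c : ℂ) + (y : ℂ) * I - w)⁻¹) (uIcc a b) :=
    ((continuous_const.add (Complex.continuous_ofReal.mul continuous_const)).sub
      continuous_const).continuousOn.inv₀ fun y _ => hne y
  rw [smul_eq_mul, ← intervalIntegral.integral_const_mul]
  apply intervalIntegral.integral_eq_sub_of_hasDerivAt
  · intro y hy
    have hslit : ((c : ℂ) + (y : ℂ) * I - w) ∈ Complex.slitPlane := by
      rw [Complex.mem_slitPlane_iff]; left; rw [hre]; exact hc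
    have hinner : HasDerivAt (fun ζ : ℂ => (c : ℂ) + ζ * I - w) I (y : ℂ) := by
      simpa using (((hasDerivAt_id (y:ℂ)).mul_const I).const_add (c : ℂ)).sub_const w
    have := ((Complex.hasDerivAt_log hslit).comp (y : ℂ) hinner).comp_ofReal
    simpa [mul_comm] using this
  · exact ContinuousOn.intervalIntegrable (continuous_const.continuousOn.mul
      (((continuous_const.add (Complex.continuous_ofReal.mul continuous_const)).sub
        continuous_const).continuousOn.inv₀ fun y _ => hne y))

-- FTC helper for left vertical segment
lemma vert_int_left {c : ℝ} {w : ℂ} (hc : 0 < w.re - c) (a b : ℝ) :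
    I • (∫ y : ℝ in a..b, ((c : ℂ) + (y : ℂ) * I - w)⁻¹) =
      Complex.log (w - ((c : ℂ) + (b : ℝ) * I)) - Complex.log (w - ((c : ℂ) + (a : ℝ) * I)) := by
  have hre : ∀ y : ℝ, (w - ((c : ℂ) + (y : ℂ) * I)).re = w.re - c := by intro y; simp
  have hne : ∀ y : ℝ, ((c : ℂ) + (y : ℂ) * I - w) ≠ 0 := by
    intro y h
    have h2 : (w - ((c : ℂ) + (y : ℂ) * I)) = -(((c : ℂ) + (y : ℂ) * I - w)) := by ring
    have := hre y; rw [h2, h] at this; simp at this; linarith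
  rw [smul_eq_mul, ← intervalIntegral.integral_const_mul]
  apply intervalIntegral.integral_eq_sub_of_hasDerivAt
  · intro y hy
    have hslit : (w - ((c : ℂ) + (y : ℂ) * I)) ∈ Complex.slitPlane := by
      rw [Complex.mem_slitPlane_iff]; left; rw [hre]; exact hc
    have hinner : HasDerivAt (fun ζ : ℂ => w - ((c : ℂ) + ζ * I)) (-I) (y : ℂ) := by
      simpa using (((hasDerivAt_id (y:ℂ)).mul_const I).const_add (c : ℂ)).const_sub w
    have h3 := ((Complex.hasDerivAt_log hslit).comp (y : ℂ) hinner).comp_ofReal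
    have heq : (w - ((c : ℂ) + (y : ℂ) * I))⁻¹ * (-I) = I * (((c : ℂ) + (y : ℂ) * I - w)⁻¹) := by
      rw [show w - ((c : ℂ) + (y : ℂ) * I) = -(((c : ℂ) + (y : ℂ) * I) - w) by ring, inv_neg]
      ring
    rw [← heq]
    simpa using h3
  · exact ContinuousOn.intervalIntegrable (continuous_const.continuousOn.mul
      (((continuous_const.add (Complex.continuous_ofReal.mul continuous_const)).sub
        continuous_const).continuousOn.inv₀ fun y _ => hne y))

lemma winding {A B : ℝ} {w : ℂ} (hre : |w.re| < A) (him : |w.im| < B) :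
    (∫ x : ℝ in (-A)..A, ((x : ℂ) + ((-B : ℝ) : ℂ) * I - w)⁻¹) -
        (∫ x : ℝ in (-A)..A, ((x : ℂ) + ((B : ℝ) : ℂ) * I - w)⁻¹) +
        I • (∫ y : ℝ in (-B)..B, (((A : ℝ) : ℂ) + (y : ℂ) * I - w)⁻¹) -
        I • (∫ y : ℝ in (-B)..B, (((-A : ℝ) : ℂ) + (y : ℂ) * I - w)⁻¹) = 2 * π * I := by
  obtain ⟨hre1, hre2⟩ := abs_lt.mp hre
  obtain ⟨him1, him2⟩ := abs_lt.mp him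
  rw [horiz_int (c := -B) (by simp; linarith) (-A) A,
      horiz_int (c := B) (by simp; linarith) (-A) A,
      vert_int_right (c := A) (by simp; linarith) (-B) B,
      vert_int_left (c := -A) (by simp; linarith) (-B) B]
  set u : ℂ := ((-A : ℝ) : ℂ) + ((-B : ℝ) : ℂ) * I - w with hu
  set v : ℂ := ((-A : ℝ) : ℂ) + ((B : ℝ) : ℂ) * I - w with hv
  have h1 : w - (((-A : ℝ) : ℂ) + ((B : ℝ) : ℂ) * I) = -v := by rw [hv]; ring
  have h2 : w - (((-A : ℝ) : ℂ) + ((-B : ℝ) : ℂ) * I) = -u := by rw [hu]; ring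
  rw [h1, h2]
  have hvim : 0 < v.im := by rw [hv]; simp; linarith
  have huim : u.im < 0 := by rw [hu]; simp; linarith
  have e1 : Complex.log v - Complex.log (-v) = π * I := by
    apply Complex.ext
    · simp [Complex.log_re]
    · simp [Complex.log_im, Complex.arg_neg_eq_arg_sub_pi_of_im_pos hvim]
  have e2 : Complex.log (-u) - Complex.log u = π * I := by
    apply Complex.ext
    · simp [Complex.log_re]
    · simp [Complex.log_im, Complex.arg_neg_eq_arg_add_pi_of_im_neg huim]
  have : ∀ lab lvb lat lvt : ℂ,
      lab - lvb - (lat - lvt) + (lat - lab) - (Complex.log (-v) - Complex.log (-u)) =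
        (lvt - Complex.log (-v)) + (Complex.log (-u) - lvb) := by intros; ring
  rw [this]
  rw [← hv, ← hu] at *
  rw [e1, e2]
  ring

lemma side_split {f : ℂ → ℂ} {w : ℂ} {σ : ℝ → ℂ} {a b : ℝ}
    (hne : ∀ t ∈ uIcc a b, σ t ≠ w)
    (hcf : ContinuousOn (fun t => f (σ t)) (uIcc a b))
    (hcσ : Continuous σ) :
    ∫ t in a..b, dslope f w (σ t) =
      (∫ t in a..b, f (σ t) * (σ t - w)⁻¹) - f w * ∫ t in a..b, (σ t - w)⁻¹ := by
  have hinv : ContinuousOn (fun t => (σ t - w)⁻¹) (uIcc a b) :=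
    ((hcσ.sub continuous_const).continuousOn).inv₀ fun t ht => sub_ne_zero.2 (hne t ht)
  have h1 : ∀ t ∈ uIcc a b, dslope f w (σ t) =
      f (σ t) * (σ t - w)⁻¹ - f w * (σ t - w)⁻¹ := by
    intro t ht
    rw [dslope_of_ne f (hne t ht), slope_def_field]
    have h2 : σ t - w ≠ 0 := sub_ne_zero.2 (hne t ht)
    field_simp
  rw [intervalIntegral.integral_congr h1,
    intervalIntegral.integral_sub (f := fun t => f (σ t) * (σ t - w)⁻¹) (g := fun t => f w * (σ t - w)⁻¹) ((hcf.mul hinv).intervalIntegrable)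
      ((continuousOn_const.mul hinv).intervalIntegrable),
    intervalIntegral.integral_const_mul]

lemma cauchy_rect {W : Set ℂ} (hW : IsOpen W) {f : ℂ → ℂ} (hf : DifferentiableOn ℂ f W)
    {A B : ℝ} (hrect : ∀ ζ : ℂ, |ζ.re| ≤ A → |ζ.im| ≤ B → ζ ∈ W)
    {w : ℂ} (hre : |w.re| < A) (him : |w.im| < B) :
    (∫ x : ℝ in (-A)..A, f ((x:ℂ) + ((-B:ℝ):ℂ) * I) * ((x:ℂ) + ((-B:ℝ):ℂ) * I - w)⁻¹) -
      (∫ x : ℝ in (-A)..A, f ((x:ℂ) + ((B:ℝ):ℂ) * I) * ((x:ℂ) + ((B:ℝ):ℂ) * I - w)⁻¹) +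
      I • (∫ y : ℝ in (-B)..B, f (((A:ℝ):ℂ) + (y:ℂ) * I) * (((A:ℝ):ℂ) + (y:ℂ) * I - w)⁻¹) -
      I • (∫ y : ℝ in (-B)..B, f (((-A:ℝ):ℂ) + (y:ℂ) * I) * (((-A:ℝ):ℂ) + (y:ℂ) * I - w)⁻¹)
      = 2 * π * I * f w := by
  have hA0 : 0 < A := (abs_nonneg _).trans_lt hre
  have hB0 : 0 < B := (abs_nonneg _).trans_lt him
  obtain ⟨hre1, hre2⟩ := abs_lt.mp hre
  obtain ⟨him1, him2⟩ := abs_lt.mp him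
  have hwW : w ∈ W := hrect w hre.le him.le
  set g : ℂ → ℂ := dslope f w with hg
  have hgW : ContinuousOn g W :=
    (continuousOn_dslope (hW.mem_nhds hwW)).2
      ⟨hf.continuousOn, hf.differentiableAt (hW.mem_nhds hwW)⟩
  have hrect' : ∀ ζ : ℂ, ζ ∈ Set.uIcc (-A) A ×ℂ Set.uIcc (-B) B → ζ ∈ W := by
    intro ζ hζ
    rw [Complex.mem_reProdIm, uIcc_of_le (by linarith), uIcc_of_le (by linarith)] at hζ
    exact hrect ζ (abs_le.2 ⟨hζ.1.1, hζ.1.2⟩) (abs_le.2 ⟨hζ.2.1, hζ.2.2⟩)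
  have h0 :
      (∫ x : ℝ in (-A)..A, g ((x:ℂ) + ((-B:ℝ):ℂ) * I)) -
        (∫ x : ℝ in (-A)..A, g ((x:ℂ) + ((B:ℝ):ℂ) * I)) +
        I • (∫ y : ℝ in (-B)..B, g (((A:ℝ):ℂ) + (y:ℂ) * I)) -
        I • (∫ y : ℝ in (-B)..B, g (((-A:ℝ):ℂ) + (y:ℂ) * I)) = 0 := by
    have := Complex.integral_boundary_rect_eq_zero_of_differentiable_on_off_countable
      g (⟨-A, -B⟩ : ℂ) (⟨A, B⟩ : ℂ) {w} (countable_singleton w)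
      (hgW.mono hrect')
      (by
        intro x hx
        obtain ⟨hx1, hx2⟩ := hx
        have hxw : x ≠ w := by simpa using hx2
        rw [Complex.mem_reProdIm] at hx1
        have hxW : x ∈ W := by
          apply hrect x
          · have := hx1.1
            rw [show min ((⟨-A,-B⟩ : ℂ).re) ((⟨A,B⟩ : ℂ).re) = -A from min_eq_left (by dsimp; linarith),
              show max ((⟨-A,-B⟩ : ℂ).re) ((⟨A,B⟩ : ℂ).re) = A from max_eq_right (by dsimp; linarith)] at this
            exact (abs_le.2 ⟨this.1.le, this.2.le⟩)
          · have := hx1.2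
            rw [show min ((⟨-A,-B⟩ : ℂ).im) ((⟨A,B⟩ : ℂ).im) = -B from min_eq_left (by dsimp; linarith),
              show max ((⟨-A,-B⟩ : ℂ).im) ((⟨A,B⟩ : ℂ).im) = B from max_eq_right (by dsimp; linarith)] at this
            exact (abs_le.2 ⟨this.1.le, this.2.le⟩)
        exact (differentiableAt_dslope_of_ne hxw).2 (hf.differentiableAt (hW.mem_nhds hxW))
      )
    exact this
  -- now split each side
  have memrect : ∀ (t : ℝ) (c : ℝ), |t| ≤ A → |c| ≤ B → ((t:ℂ) + (c:ℂ) * I) ∈ W := by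
    intro t c h1 h2; apply hrect <;> simp [h1, h2]
  have memrect' : ∀ (c : ℝ) (t : ℝ), |c| ≤ A → |t| ≤ B → ((c:ℂ) + (t:ℂ) * I) ∈ W := by
    intro c t h1 h2; apply hrect <;> simp [h1, h2]
  have habs : ∀ t : ℝ, t ∈ uIcc (-A) A → |t| ≤ A := by
    intro t ht; rw [uIcc_of_le (by linarith)] at ht; exact abs_le.2 ⟨ht.1, ht.2⟩
  have habsB : ∀ t : ℝ, t ∈ uIcc (-B) B → |t| ≤ B := by
    intro t ht; rw [uIcc_of_le (by linarith)] at ht; exact abs_le.2 ⟨ht.1, ht.2⟩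
  have hfc : ContinuousOn f W := hf.continuousOn
  have e1 := side_split (f := f) (w := w) (σ := fun x : ℝ => (x:ℂ) + ((-B:ℝ):ℂ) * I)
    (a := -A) (b := A)
    (fun t ht h => by
      have : w.im = -B := by rw [← h]; simp
      linarith)
    (hfc.comp (by fun_prop) (fun t ht => memrect t (-B) (habs t ht) (by simp [abs_of_pos hB0, hB0.le])))
    (by fun_prop)
  have e2 := side_split (f := f) (w := w) (σ := fun x : ℝ => (x:ℂ) + ((B:ℝ):ℂ) * I)
    (a := -A) (b := A)
    (fun t ht h => by
      have : w.im = B := by rw [← h]; simp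
      linarith)
    (hfc.comp (by fun_prop) (fun t ht => memrect t B (habs t ht) (by simp [abs_of_pos hB0])))
    (by fun_prop)
  have e3 := side_split (f := f) (w := w) (σ := fun y : ℝ => ((A:ℝ):ℂ) + (y:ℂ) * I)
    (a := -B) (b := B)
    (fun t ht h => by
      have : w.re = A := by rw [← h]; simp
      linarith)
    (hfc.comp (by fun_prop) (fun t ht => memrect' A t (by simp [abs_of_pos hA0]) (habsB t ht)))
    (by fun_prop)
  have e4 := side_split (f := f) (w := w) (σ := fun y : ℝ => ((-A:ℝ):ℂ) + (y:ℂ) * I)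
    (a := -B) (b := B)
    (fun t ht h => by
      have : w.re = -A := by rw [← h]; simp
      linarith)
    (hfc.comp (by fun_prop) (fun t ht => memrect' (-A) t (by rw [abs_neg, abs_of_pos hA0]) (habsB t ht)))
    (by fun_prop)
  have hwind := winding hre him
  rw [hg] at h0
  rw [e1, e2, e3, e4] at h0
  simp only [smul_eq_mul] at h0 hwind ⊢
  linear_combination h0 + f w * hwind

set_option synthInstance.maxHeartbeats 1000000 in
set_option maxHeartbeats 1000000 in
lemma paramInt_diff {m : ℕ} {U : Set ((Fin m → ℂ) × ℂ)} (hU : IsOpen U)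
    {φ : (Fin m → ℂ) × ℂ → ℂ} (hφ : DifferentiableOn ℂ φ U)
    {V : Set (Fin m → ℂ)} (hV : IsOpen V)
    (σ : ℝ → ℂ) (hσ : Continuous σ) (a b : ℝ)
    (hsub : ∀ z ∈ V, ∀ t ∈ Set.uIcc a b, (z, σ t) ∈ U) :
    DifferentiableOn ℂ (fun p : (Fin m → ℂ) × ℂ => ∫ t in a..b, φ (p.1, σ t) * (σ t - p.2)⁻¹)
      (V ×ˢ (σ '' Set.uIcc a b)ᶜ) := by
  set S : Set ℂ := σ '' Set.uIcc a b with hS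
  have hScomp : IsCompact S := isCompact_uIcc.image hσ
  have hSclosed : IsClosed S := hScomp.isClosed
  have hSne : S.Nonempty := (nonempty_uIcc).image σ
  intro p₀ hp₀
  obtain ⟨hz₀V, hw₀S⟩ := mem_prod.1 hp₀
  -- choose radii
  obtain ⟨ε₁, hε₁, hball⟩ := Metric.isOpen_iff.1 hV _ hz₀V
  have hcbV : closedBall p₀.1 (ε₁ / 2) ⊆ V :=
    (closedBall_subset_ball (by linarith)).trans hball
  set d : ℝ := infDist p₀.2 S with hd
  have hd0 : 0 < d := (hSclosed.notMem_iff_infDist_pos hSne).1 hw₀S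
  set ε : ℝ := min (ε₁ / 2) (d / 2) with hε
  have hε0 : 0 < ε := lt_min (by linarith) (by linarith)
  -- basic distance facts
  have hfst : ∀ x : (Fin m → ℂ) × ℂ, x ∈ ball p₀ ε → x.1 ∈ closedBall p₀.1 (ε₁ / 2) := by
    intro x hx
    have : dist x.1 p₀.1 ≤ dist x p₀ := le_max_left _ _
    exact mem_closedBall.2 (this.trans ((mem_ball.1 hx).le.trans (min_le_left _ _)))
  have hlow : ∀ (x : (Fin m → ℂ) × ℂ), x ∈ ball p₀ ε → ∀ t ∈ Set.uIcc a b,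
      d / 2 ≤ ‖σ t - x.2‖ := by
    intro x hx t ht
    have h1 : d ≤ ‖σ t - p₀.2‖ := by
      have h1' := infDist_le_dist_of_mem (x := p₀.2) (Set.mem_image_of_mem σ ht)
      rw [dist_eq_norm, norm_sub_rev] at h1'
      exact h1'
    have h2 : dist x.2 p₀.2 ≤ dist x p₀ := le_max_right _ _
    have h3 : ‖x.2 - p₀.2‖ < d / 2 := by
      rw [← dist_eq_norm]
      exact lt_of_le_of_lt h2 ((mem_ball.1 hx).trans_le (min_le_right _ _))
    have := norm_sub_norm_le (σ t - p₀.2) (x.2 - p₀.2)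
    have h4 : σ t - p₀.2 - (x.2 - p₀.2) = σ t - x.2 := by ring
    rw [h4] at this
    linarith
  -- compact set and bounds
  set K : Set ((Fin m → ℂ) × ℂ) := closedBall p₀.1 (ε₁ / 2) ×ˢ S with hK
  have hKcomp : IsCompact K := (isCompact_closedBall _ _).prod hScomp
  have hKU : K ⊆ U := by
    rintro ⟨z, ζ⟩ ⟨hz, t, ht, rfl⟩
    exact hsub z (hcbV hz) t ht
  obtain ⟨C, hC0, hCbd⟩ := fderiv_bound hU hφ hKcomp hKU
  obtain ⟨M, hM⟩ := hKcomp.exists_bound_of_continuousOn (hφ.continuousOn.mono hKU)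
  set M' : ℝ := max M 0 with hM'
  have hM'0 : 0 ≤ M' := le_max_right _ _
  set L : ℝ := C * (2 / d) + M' * ((2 / d) * (2 / d)) with hL
  have hL0 : 0 ≤ L := by positivity
  -- Lipschitz bound for the z-part
  have hzlip : ∀ t ∈ Set.uIcc a b, ∀ z ∈ closedBall p₀.1 (ε₁ / 2),
      ∀ z' ∈ closedBall p₀.1 (ε₁ / 2), ‖φ (z, σ t) - φ (z', σ t)‖ ≤ C * ‖z - z'‖ := by
    intro t ht z hz z' hz'
    have hder : ∀ x ∈ closedBall p₀.1 (ε₁ / 2),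
        HasFDerivWithinAt (fun z => φ (z, σ t))
          ((fderiv ℂ φ (x, σ t)).comp (ContinuousLinearMap.inl ℂ (Fin m → ℂ) ℂ))
          (closedBall p₀.1 (ε₁ / 2)) x := by
      intro x hx
      have hmem : (x, σ t) ∈ U := hKU ⟨hx, t, ht, rfl⟩
      exact (((hφ.differentiableAt (hU.mem_nhds hmem)).hasFDerivAt).comp x
        (hasFDerivAt_prodMk_left x (σ t))).hasFDerivWithinAt
    have hnorm : ∀ x ∈ closedBall p₀.1 (ε₁ / 2),
        ‖(fderiv ℂ φ (x, σ t)).comp (ContinuousLinearMap.inl ℂ (Fin m → ℂ) ℂ)‖ ≤ C := by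
      intro x hx
      refine ContinuousLinearMap.opNorm_le_bound _ hC0 fun u => ?_
      have h1 : ‖(fderiv ℂ φ (x, σ t)) (u, (0:ℂ))‖ ≤ ‖fderiv ℂ φ (x, σ t)‖ * ‖((u, (0:ℂ)) :
          (Fin m → ℂ) × ℂ)‖ := ContinuousLinearMap.le_opNorm _ _
      have h2 : ‖((u, (0:ℂ)) : (Fin m → ℂ) × ℂ)‖ = ‖u‖ := by
        simp [Prod.norm_def]
      simp only [ContinuousLinearMap.coe_comp', Function.comp_apply,
        ContinuousLinearMap.inl_apply]
      rw [h2] at h1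
      exact h1.trans (mul_le_mul_of_nonneg_right (hCbd _ ⟨hx, t, ht, rfl⟩) (norm_nonneg u))
    exact Convex.norm_image_sub_le_of_norm_hasFDerivWithin_le hder hnorm
      (convex_closedBall _ _) hz' hz
  -- the inverse bound
  have hinvle : ∀ x : ℂ, d / 2 ≤ ‖x‖ → ‖x⁻¹‖ ≤ 2 / d := by
    intro x hx
    rw [norm_inv, show (2:ℝ) / d = (d / 2)⁻¹ by field_simp]
    exact inv_anti₀ (by linarith) hx
  -- continuity of the integrand for fixed x
  have hFcont : ∀ x : (Fin m → ℂ) × ℂ, x ∈ ball p₀ ε →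
      ContinuousOn (fun t => φ (x.1, σ t) * (σ t - x.2)⁻¹) (Set.uIcc a b) := by
    intro x hx
    have h1 : ContinuousOn (fun t : ℝ => φ (x.1, σ t)) (Set.uIcc a b) := by
      apply (hφ.continuousOn).comp (Continuous.continuousOn (by fun_prop))
      intro t ht
      exact hsub x.1 (hcbV (hfst x hx)) t ht
    apply h1.mul
    apply ((hσ.sub continuous_const).continuousOn).inv₀
    intro t ht
    have := hlow x hx t ht
    intro h
    rw [show σ t - x.2 = 0 from h] at this
    simp at this
    linarith
  -- the main Lipschitz estimate
  have hliponball : ∀ t ∈ Ι a b,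
      LipschitzOnWith (Real.nnabs L)
        (fun x : (Fin m → ℂ) × ℂ => φ (x.1, σ t) * (σ t - x.2)⁻¹) (ball p₀ ε) := by
    intro t ht'
    have ht : t ∈ Set.uIcc a b := uIoc_subset_uIcc ht'
    rw [lipschitzOnWith_iff_dist_le_mul]
    intro x hx y hy
    rw [dist_eq_norm, dist_eq_norm]
    have hx1 := hfst x hx
    have hy1 := hfst y hy
    have hxinv := hinvle _ (hlow x hx t ht)
    have hyinv := hinvle _ (hlow y hy t ht)
    have hxne : σ t - x.2 ≠ 0 := by
      intro h; have := hlow x hx t ht; rw [h] at this; simp at this; linarith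
    have hyne : σ t - y.2 ≠ 0 := by
      intro h; have := hlow y hy t ht; rw [h] at this; simp at this; linarith
    have hsplit : φ (x.1, σ t) * (σ t - x.2)⁻¹ - φ (y.1, σ t) * (σ t - y.2)⁻¹ =
        (φ (x.1, σ t) - φ (y.1, σ t)) * (σ t - x.2)⁻¹ +
          φ (y.1, σ t) * ((σ t - x.2)⁻¹ - (σ t - y.2)⁻¹) := by ring
    have hinvdiff : (σ t - x.2)⁻¹ - (σ t - y.2)⁻¹ =
        (x.2 - y.2) * ((σ t - x.2)⁻¹ * (σ t - y.2)⁻¹) := by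
      field_simp
      ring
    have hb1 : ‖(φ (x.1, σ t) - φ (y.1, σ t)) * (σ t - x.2)⁻¹‖ ≤
        (C * ‖x.1 - y.1‖) * (2 / d) := by
      rw [norm_mul]
      exact mul_le_mul (hzlip t ht _ hx1 _ hy1) hxinv (norm_nonneg _)
        (by positivity)
    have hb2 : ‖φ (y.1, σ t) * ((σ t - x.2)⁻¹ - (σ t - y.2)⁻¹)‖ ≤
        M' * (‖x.2 - y.2‖ * ((2 / d) * (2 / d))) := by
      rw [norm_mul, hinvdiff, norm_mul, norm_mul]
      have hMy : ‖φ (y.1, σ t)‖ ≤ M' := le_trans (hM _ ⟨hy1, t, ht, rfl⟩) (le_max_left _ _)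
      refine mul_le_mul hMy ?_ (by positivity) hM'0
      exact mul_le_mul_of_nonneg_left (mul_le_mul hxinv hyinv (norm_nonneg _) (by positivity))
        (norm_nonneg _)
    have hd1 : ‖x.1 - y.1‖ ≤ ‖x - y‖ := le_max_left _ _
    have hd2 : ‖x.2 - y.2‖ ≤ ‖x - y‖ := le_max_right _ _
    calc ‖φ (x.1, σ t) * (σ t - x.2)⁻¹ - φ (y.1, σ t) * (σ t - y.2)⁻¹‖
        ≤ (C * ‖x.1 - y.1‖) * (2 / d) + M' * (‖x.2 - y.2‖ * ((2 / d) * (2 / d))) := by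
          rw [hsplit]
          exact (norm_add_le _ _).trans (add_le_add hb1 hb2)
      _ ≤ (C * ‖x - y‖) * (2 / d) + M' * (‖x - y‖ * ((2 / d) * (2 / d))) := by
          gcongr
      _ = L * ‖x - y‖ := by rw [hL]; ring
      _ ≤ ↑(Real.nnabs L) * ‖x - y‖ := by
          gcongr
          exact le_abs_self L
  -- derivative at p₀ for fixed t
  set J : ((Fin m → ℂ) × ℂ) →L[ℂ] (Fin m → ℂ) × ℂ :=
    (ContinuousLinearMap.inl ℂ (Fin m → ℂ) ℂ).comp
      (ContinuousLinearMap.fst ℂ (Fin m → ℂ) ℂ) with hJ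
  set F' : ℝ → ((Fin m → ℂ) × ℂ) →L[ℂ] ℂ := fun t =>
    φ (p₀.1, σ t) • (((σ t - p₀.2) ^ 2)⁻¹ • ContinuousLinearMap.snd ℂ (Fin m → ℂ) ℂ) +
      (σ t - p₀.2)⁻¹ • ((fderiv ℂ φ (p₀.1, σ t)).comp J) with hF'
  have hp₀ball : p₀ ∈ ball p₀ ε := mem_ball_self hε0
  have hdiff : ∀ t ∈ Ι a b,
      HasFDerivAt (fun x : (Fin m → ℂ) × ℂ => φ (x.1, σ t) * (σ t - x.2)⁻¹) (F' t) p₀ := by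
    intro t ht'
    have ht : t ∈ Set.uIcc a b := uIoc_subset_uIcc ht'
    have hne : σ t - p₀.2 ≠ 0 := by
      intro h; have := hlow p₀ hp₀ball t ht; rw [h] at this; simp at this; linarith
    have hmem : (p₀.1, σ t) ∈ U := hsub p₀.1 hz₀V t ht
    have h1 : HasFDerivAt (fun x : (Fin m → ℂ) × ℂ => φ (x.1, σ t))
        ((fderiv ℂ φ (p₀.1, σ t)).comp J) p₀ := by
      have := ((hφ.differentiableAt (hU.mem_nhds hmem)).hasFDerivAt.comp p₀.1
        (hasFDerivAt_prodMk_left p₀.1 (σ t))).comp p₀ (hasFDerivAt_fst (𝕜 := ℂ))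
      rw [hJ, ← ContinuousLinearMap.comp_assoc]
      exact this
    have h2 : HasFDerivAt (fun x : (Fin m → ℂ) × ℂ => (σ t - x.2)⁻¹)
        (((σ t - p₀.2) ^ 2)⁻¹ • ContinuousLinearMap.snd ℂ (Fin m → ℂ) ℂ) p₀ := by
      have hd' : HasDerivAt (fun w : ℂ => (σ t - w)⁻¹) (((σ t - p₀.2) ^ 2)⁻¹) p₀.2 := by
        have h0 : HasDerivAt (fun w : ℂ => σ t - w) (-1) p₀.2 :=
          (hasDerivAt_id _).const_sub (σ t)
        have := h0.inv hne
        rw [show (fun w : ℂ => (σ t - w)⁻¹) = (fun w : ℂ => σ t - w)⁻¹ from rfl]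
        exact this.congr_deriv (by simp)
      exact hd'.comp_hasFDerivAt p₀ hasFDerivAt_snd
    have := h1.mul h2
    rw [hF']
    exact this
  -- measurability of F'
  have hF'meas : AEStronglyMeasurable F' (volume.restrict (Ι a b)) := by
    have m1 : Measurable fun t => fderiv ℂ φ (p₀.1, σ t) :=
      (measurable_fderiv ℂ φ).comp (Continuous.measurable (by fun_prop))
    have m2 : Measurable fun t => (fderiv ℂ φ (p₀.1, σ t)).comp J := by
      have hcont : Continuous fun L : ((Fin m → ℂ) × ℂ) →L[ℂ] ℂ => L.comp J :=
        ((ContinuousLinearMap.compL ℂ ((Fin m → ℂ) × ℂ) ((Fin m → ℂ) × ℂ) ℂ).flip J).continuous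
      exact hcont.measurable.comp m1
    have a2 : AEStronglyMeasurable (fun t => (fderiv ℂ φ (p₀.1, σ t)).comp J)
        (volume.restrict (Ι a b)) := m2.aestronglyMeasurable
    have aφ : AEStronglyMeasurable (fun t => φ (p₀.1, σ t)) (volume.restrict (Ι a b)) := by
      refine ContinuousOn.aestronglyMeasurable ?_ measurableSet_uIoc
      apply ((hφ.continuousOn).comp (Continuous.continuousOn (by fun_prop))
        (fun t ht => hsub p₀.1 hz₀V t (uIoc_subset_uIcc ht)))
    have hnev : ∀ t ∈ Ι a b, σ t - p₀.2 ≠ 0 := by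
      intro t ht h
      have := hlow p₀ hp₀ball t (uIoc_subset_uIcc ht)
      rw [h] at this; simp at this; linarith
    have ainv : AEStronglyMeasurable (fun t => (σ t - p₀.2)⁻¹) (volume.restrict (Ι a b)) := by
      refine ContinuousOn.aestronglyMeasurable ?_ measurableSet_uIoc
      exact ((hσ.sub continuous_const).continuousOn).inv₀ hnev
    have ainv2 : AEStronglyMeasurable (fun t => ((σ t - p₀.2) ^ 2)⁻¹)
        (volume.restrict (Ι a b)) := by
      refine ContinuousOn.aestronglyMeasurable ?_ measurableSet_uIoc
      exact (((hσ.sub continuous_const).pow 2).continuousOn).inv₀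
        (fun t ht => pow_ne_zero 2 (hnev t ht))
    exact (aφ.smul (ainv2.smul aestronglyMeasurable_const)).add (ainv.smul a2)
  -- apply dominated differentiation
  have hmeas : ∀ᶠ x in nhds p₀, AEStronglyMeasurable
      (fun t => φ (x.1, σ t) * (σ t - x.2)⁻¹) (volume.restrict (Ι a b)) :=
    Filter.eventually_of_mem (ball_mem_nhds p₀ hε0) (fun x hx =>
      ((hFcont x hx).mono uIoc_subset_uIcc).aestronglyMeasurable measurableSet_uIoc)
  have hint : IntervalIntegrable (fun t => φ (p₀.1, σ t) * (σ t - p₀.2)⁻¹) volume a b :=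
    (hFcont p₀ hp₀ball).intervalIntegrable
  have hlip' : ∀ᵐ t ∂(volume : Measure ℝ), t ∈ Ι a b →
      LipschitzOnWith (Real.nnabs L)
        (fun x : (Fin m → ℂ) × ℂ => φ (x.1, σ t) * (σ t - x.2)⁻¹) (ball p₀ ε) :=
    Filter.Eventually.of_forall hliponball
  have hdiff' : ∀ᵐ t ∂(volume : Measure ℝ), t ∈ Ι a b →
      HasFDerivAt (fun x : (Fin m → ℂ) × ℂ => φ (x.1, σ t) * (σ t - x.2)⁻¹) (F' t) p₀ :=
    Filter.Eventually.of_forall hdiff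
  have key := intervalIntegral.hasFDerivAt_integral_of_dominated_loc_of_lip
    (𝕜 := ℂ) (μ := volume) (bound := fun _ => L)
    (ball_mem_nhds p₀ hε0) hmeas hint hF'meas hlip' intervalIntegrable_const hdiff'
  have : DifferentiableAt ℂ
      (fun p : (Fin m → ℂ) × ℂ => ∫ t in a..b, φ (p.1, σ t) * (σ t - p.2)⁻¹) p₀ := ⟨_, key.2⟩
  exact this.differentiableWithinAt


lemma rect_compact (a b c d : ℝ) :
    IsCompact {w : ℂ | a ≤ w.re ∧ w.re ≤ b ∧ c ≤ w.im ∧ w.im ≤ d} := by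
  apply Metric.isCompact_of_isClosed_isBounded
  · have h : {w : ℂ | a ≤ w.re ∧ w.re ≤ b ∧ c ≤ w.im ∧ w.im ≤ d} =
        Complex.re ⁻¹' (Icc a b) ∩ Complex.im ⁻¹' (Icc c d) := by
      ext w; simp [Set.mem_Icc, and_assoc]
    rw [h]
    exact (isClosed_Icc.preimage Complex.continuous_re).inter
      (isClosed_Icc.preimage Complex.continuous_im)
  · apply (Metric.isBounded_closedBall (x := (0:ℂ)) (r := |a| + |b| + |c| + |d|)).subset
    intro w hw
    obtain ⟨h1, h2, h3, h4⟩ := hw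
    rw [Metric.mem_closedBall, dist_zero_right]
    have habs := Complex.norm_le_abs_re_add_abs_im w
    have hre : |w.re| ≤ |a| + |b| :=
      abs_le.2 ⟨by linarith [neg_abs_le a, abs_nonneg b], by linarith [le_abs_self b, abs_nonneg a]⟩
    have him : |w.im| ≤ |c| + |d| :=
      abs_le.2 ⟨by linarith [neg_abs_le c, abs_nonneg d], by linarith [le_abs_self d, abs_nonneg c]⟩
    calc ‖w‖ ≤ |w.re| + |w.im| := habs
      _ ≤ |a| + |b| + (|c| + |d|) := by linarith
      _ = |a| + |b| + |c| + |d| := by ring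

lemma clamp_lemma {x b c : ℝ} (hb : 0 ≤ b) (hc : 0 ≤ c) (hx : |x| ≤ b + c) :
    |max (-b) (min b x)| ≤ b ∧ |x - max (-b) (min b x)| ≤ c := by
  obtain ⟨hx1, hx2⟩ := abs_le.1 hx
  rcases le_total x (-b) with h | h
  · rw [min_eq_right (by linarith), max_eq_left h]
    constructor
    · rw [abs_neg, _root_.abs_of_nonneg hb]
    · rw [abs_le]; constructor <;> linarith
  · rcases le_total b x with h' | h'
    · rw [min_eq_left h', max_eq_right (by linarith)]
      constructor
      · rw [_root_.abs_of_nonneg hb]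
      · rw [abs_le]; constructor <;> linarith
    · rw [min_eq_right h', max_eq_right h]
      constructor
      · rw [abs_le]; constructor <;> linarith
      · simpa using hc

/-- A closed cuboid in ℂ^m: a product of closed rectangles with sides parallel to the
real and imaginary axes (degenerate edges allowed). -/
def IsClosedCuboid {m : ℕ} (E : Set (Fin m → ℂ)) : Prop :=
  ∃ a b c d : Fin m → ℝ, (∀ j, a j ≤ b j) ∧ (∀ j, c j ≤ d j) ∧
    E = {z | ∀ j, a j ≤ (z j).re ∧ (z j).re ≤ b j ∧ c j ≤ (z j).im ∧ (z j).im ≤ d j}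









/-- Cousin decomposition: a function `φ` holomorphic near
`F × {|Re z_n| ≤ δ, |Im z_n| ≤ θ + δ}` splits as `φ = Φ₁ - Φ₂` near `E₁ ∩ E₂`, where
`Φ₁, Φ₂` are holomorphic near `E₁ = F × {-T ≤ Re z_n ≤ δ, |Im z_n| ≤ θ}` and
`E₂ = F × {-δ ≤ Re z_n ≤ T, |Im z_n| ≤ θ}` respectively. -/
theorem stmt_7 (m : ℕ) (F : Set (Fin m → ℂ)) (hF : IsClosedCuboid F)
    (T δ θ : ℝ) (hδ : 0 < δ) (hδT : δ < T) (hθ : 0 ≤ θ)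
    (U : Set ((Fin m → ℂ) × ℂ)) (hU : IsOpen U)
    (hUsub : F ×ˢ {w : ℂ | |w.re| ≤ δ ∧ |w.im| ≤ θ + δ} ⊆ U)
    (φ : (Fin m → ℂ) × ℂ → ℂ) (hφ : DifferentiableOn ℂ φ U) :
    ∃ (U₁ U₂ U₃ : Set ((Fin m → ℂ) × ℂ)) (Φ₁ Φ₂ : (Fin m → ℂ) × ℂ → ℂ),
      IsOpen U₁ ∧ IsOpen U₂ ∧ IsOpen U₃ ∧
      F ×ˢ {w : ℂ | -T ≤ w.re ∧ w.re ≤ δ ∧ |w.im| ≤ θ} ⊆ U₁ ∧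
      F ×ˢ {w : ℂ | -δ ≤ w.re ∧ w.re ≤ T ∧ |w.im| ≤ θ} ⊆ U₂ ∧
      (F ×ˢ {w : ℂ | -T ≤ w.re ∧ w.re ≤ δ ∧ |w.im| ≤ θ}) ∩
        (F ×ˢ {w : ℂ | -δ ≤ w.re ∧ w.re ≤ T ∧ |w.im| ≤ θ}) ⊆ U₃ ∧
      U₃ ⊆ U₁ ∩ U₂ ∧ U₃ ⊆ U ∧
      DifferentiableOn ℂ Φ₁ U₁ ∧ DifferentiableOn ℂ Φ₂ U₂ ∧
      ∀ z ∈ U₃, Φ₁ z - Φ₂ z = φ z := by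
  classical
  -- compactness of F
  obtain ⟨av, bv, cv, dv, hab, hcd, hFeq⟩ := hF
  have hFcomp : IsCompact F := by
    rw [hFeq]
    have heq : {z : Fin m → ℂ | ∀ j, av j ≤ (z j).re ∧ (z j).re ≤ bv j ∧
        cv j ≤ (z j).im ∧ (z j).im ≤ dv j} =
        Set.pi Set.univ (fun j => {w : ℂ | av j ≤ w.re ∧ w.re ≤ bv j ∧
          cv j ≤ w.im ∧ w.im ≤ dv j}) := by
      ext z; simp [Set.mem_pi]
    rw [heq]
    exact isCompact_univ_pi fun j => rect_compact _ _ _ _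
  -- compactness of the middle rectangle K
  set K : Set ℂ := {w : ℂ | |w.re| ≤ δ ∧ |w.im| ≤ θ + δ} with hKdef
  have hKcomp : IsCompact K := by
    have heq : K = {w : ℂ | -δ ≤ w.re ∧ w.re ≤ δ ∧ -(θ + δ) ≤ w.im ∧ w.im ≤ θ + δ} := by
      ext w; rw [hKdef]; simp [abs_le, and_assoc]
    rw [heq]; exact rect_compact _ _ _ _
  -- tube lemma
  obtain ⟨V, W, hVo, hWo, hFV, hKW, hVWU⟩ := generalized_tube_lemma hFcomp hKcomp hU hUsub
  obtain ⟨r, hr, hthW⟩ := hKcomp.exists_thickening_subset_open hWo hKW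
  set A : ℝ := δ + r / 3 with hA
  set B : ℝ := θ + δ + r / 3 with hB
  have hδA : δ < A := by rw [hA]; linarith
  have hθB : θ < B := by rw [hB]; linarith
  have hA0 : 0 < A := by linarith
  have hB0 : 0 < B := by linarith
  -- the closed A×B rectangle is inside W
  have hrectW : ∀ ζ : ℂ, |ζ.re| ≤ A → |ζ.im| ≤ B → ζ ∈ W := by
    intro ζ h1 h2
    obtain ⟨hc1, hc2⟩ := clamp_lemma (x := ζ.re) hδ.le (by positivity : (0:ℝ) ≤ r/3) (hA ▸ h1)
    obtain ⟨hd1, hd2⟩ := clamp_lemma (x := ζ.im) (by linarith : (0:ℝ) ≤ θ + δ)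
      (by positivity : (0:ℝ) ≤ r/3) (hB ▸ h2)
    set p : ℂ := ⟨max (-δ) (min δ ζ.re), max (-(θ+δ)) (min (θ+δ) ζ.im)⟩ with hp
    have hpK : p ∈ K := ⟨hc1, hd1⟩
    have hdist : dist ζ p < r := by
      have h3 : dist ζ p = ‖ζ - p‖ := by rw [Complex.dist_eq]
      have h4 : (ζ - p).re = ζ.re - max (-δ) (min δ ζ.re) := by rw [hp]; simp
      have h5 : (ζ - p).im = ζ.im - max (-(θ+δ)) (min (θ+δ) ζ.im) := by rw [hp]; simp
      have h6 := Complex.norm_le_abs_re_add_abs_im (ζ - p)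
      rw [h4, h5] at h6
      rw [h3]
      have : ‖ζ - p‖ ≤ r/3 + r/3 := le_trans h6 (by linarith)
      linarith
    exact hthW (Metric.mem_thickening_iff.2 ⟨p, hpK, hdist⟩)
  -- contour pieces
  set σb : ℝ → ℂ := fun t => (t : ℂ) + ((-B : ℝ) : ℂ) * I with hσb
  set σt : ℝ → ℂ := fun t => (t : ℂ) + ((B : ℝ) : ℂ) * I with hσt
  set σr : ℝ → ℂ := fun t => (((A : ℝ)) : ℂ) + (t : ℂ) * I with hσr
  set σl : ℝ → ℂ := fun t => (((-A : ℝ)) : ℂ) + (t : ℂ) * I with hσl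
  have hσbim : ∀ t : ℝ, (σb t).im = -B := by intro t; rw [hσb]; simp
  have hσtim : ∀ t : ℝ, (σt t).im = B := by intro t; rw [hσt]; simp
  have hσrre : ∀ t : ℝ, (σr t).re = A := by intro t; rw [hσr]; simp
  have hσlre : ∀ t : ℝ, (σl t).re = -A := by intro t; rw [hσl]; simp
  set Γ₁ : Set ℂ := σb '' Set.uIcc 0 A ∪ σt '' Set.uIcc 0 A ∪ σr '' Set.uIcc (-B) B with hΓ₁
  set Γ₂ : Set ℂ := σb '' Set.uIcc (-A) 0 ∪ σt '' Set.uIcc (-A) 0 ∪ σl '' Set.uIcc (-B) B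
    with hΓ₂
  have hσbc : Continuous σb := by rw [hσb]; fun_prop
  have hσtc : Continuous σt := by rw [hσt]; fun_prop
  have hσrc : Continuous σr := by rw [hσr]; fun_prop
  have hσlc : Continuous σl := by rw [hσl]; fun_prop
  have hΓ₁cl : IsClosed Γ₁ :=
    (((isCompact_uIcc.image hσbc).union (isCompact_uIcc.image hσtc)).union
      (isCompact_uIcc.image hσrc)).isClosed
  have hΓ₂cl : IsClosed Γ₂ :=
    (((isCompact_uIcc.image hσbc).union (isCompact_uIcc.image hσtc)).union
      (isCompact_uIcc.image hσlc)).isClosed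
  -- the three open sets
  set W₃ : Set ℂ := {w : ℂ | |w.re| < A} ∩ {w : ℂ | |w.im| < B} ∩ W with hW₃
  have hW₃o : IsOpen W₃ := by
    apply IsOpen.inter _ hWo
    exact (isOpen_lt (continuous_abs.comp Complex.continuous_re) continuous_const).inter
      (isOpen_lt (continuous_abs.comp Complex.continuous_im) continuous_const)
  -- the two functions
  set Φ₁ : (Fin m → ℂ) × ℂ → ℂ := fun p => (2 * (π:ℂ) * I)⁻¹ *
    ((∫ x : ℝ in (0:ℝ)..A, φ (p.1, σb x) * (σb x - p.2)⁻¹) -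
      (∫ x : ℝ in (0:ℝ)..A, φ (p.1, σt x) * (σt x - p.2)⁻¹) +
      I * (∫ y : ℝ in (-B)..B, φ (p.1, σr y) * (σr y - p.2)⁻¹)) with hΦ₁
  set Φ₂ : (Fin m → ℂ) × ℂ → ℂ := fun p => (2 * (π:ℂ) * I)⁻¹ *
    ((∫ x : ℝ in (-A)..(0:ℝ), φ (p.1, σt x) * (σt x - p.2)⁻¹) -
      (∫ x : ℝ in (-A)..(0:ℝ), φ (p.1, σb x) * (σb x - p.2)⁻¹) +
      I * (∫ y : ℝ in (-B)..B, φ (p.1, σl y) * (σl y - p.2)⁻¹)) with hΦ₂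
  have habsA : ∀ t : ℝ, t ∈ Set.uIcc (-A) A → |t| ≤ A := by
    intro t ht
    rw [Set.uIcc_of_le (by linarith)] at ht
    exact abs_le.2 ⟨ht.1, ht.2⟩
  have habsB : ∀ t : ℝ, t ∈ Set.uIcc (-B) B → |t| ≤ B := by
    intro t ht
    rw [Set.uIcc_of_le (by linarith)] at ht
    exact abs_le.2 ⟨ht.1, ht.2⟩
  have hbW : ∀ t : ℝ, |t| ≤ A → σb t ∈ W := by
    intro t ht
    apply hrectW
    · rw [hσb]; simpa using ht
    · rw [hσbim t, abs_neg, _root_.abs_of_pos hB0]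
  have htW : ∀ t : ℝ, |t| ≤ A → σt t ∈ W := by
    intro t ht
    apply hrectW
    · rw [hσt]; simpa using ht
    · rw [hσtim t, _root_.abs_of_pos hB0]
  have hrW : ∀ t : ℝ, |t| ≤ B → σr t ∈ W := by
    intro t ht
    apply hrectW
    · rw [hσrre t, _root_.abs_of_pos hA0]
    · rw [hσr]; simpa using ht
  have hlW : ∀ t : ℝ, |t| ≤ B → σl t ∈ W := by
    intro t ht
    apply hrectW
    · rw [hσlre t, abs_neg, _root_.abs_of_pos hA0]
    · rw [hσl]; simpa using ht
  have hsub0A : Set.uIcc (0:ℝ) A ⊆ Set.uIcc (-A) A :=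
    Set.uIcc_subset_uIcc (by rw [Set.uIcc_of_le (by linarith)]; exact ⟨by linarith, by linarith⟩)
      (by rw [Set.uIcc_of_le (by linarith)]; exact ⟨by linarith, le_refl A⟩)
  have hsubA0 : Set.uIcc (-A) (0:ℝ) ⊆ Set.uIcc (-A) A :=
    Set.uIcc_subset_uIcc (by rw [Set.uIcc_of_le (by linarith)]; exact ⟨le_refl _, by linarith⟩)
      (by rw [Set.uIcc_of_le (by linarith)]; exact ⟨by linarith, by linarith⟩)
  refine ⟨V ×ˢ Γ₁ᶜ, V ×ˢ Γ₂ᶜ, V ×ˢ W₃, Φ₁, Φ₂,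
    hVo.prod hΓ₁cl.isOpen_compl, hVo.prod hΓ₂cl.isOpen_compl, hVo.prod hW₃o,
    ?_, ?_, ?_, ?_, ?_, ?_, ?_, ?_⟩
  -- E₁ ⊆ U₁
  · rintro ⟨z, w⟩ ⟨hzF, hw⟩
    simp only [Set.mem_setOf_eq] at hw
    obtain ⟨hw1, hw2, hw3⟩ := hw
    refine ⟨hFV hzF, ?_⟩
    rintro ((⟨t, ht, rfl⟩ | ⟨t, ht, rfl⟩) | ⟨t, ht, rfl⟩)
    · rw [hσbim t, abs_neg, _root_.abs_of_pos hB0] at hw3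
      linarith
    · rw [hσtim t, _root_.abs_of_pos hB0] at hw3
      linarith
    · rw [hσrre t] at hw2
      linarith
  -- E₂ ⊆ U₂
  · rintro ⟨z, w⟩ ⟨hzF, hw⟩
    simp only [Set.mem_setOf_eq] at hw
    obtain ⟨hw1, hw2, hw3⟩ := hw
    refine ⟨hFV hzF, ?_⟩
    rintro ((⟨t, ht, rfl⟩ | ⟨t, ht, rfl⟩) | ⟨t, ht, rfl⟩)
    · rw [hσbim t, abs_neg, _root_.abs_of_pos hB0] at hw3
      linarith
    · rw [hσtim t, _root_.abs_of_pos hB0] at hw3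
      linarith
    · rw [hσlre t] at hw1
      linarith
  -- E₁ ∩ E₂ ⊆ U₃
  · rintro ⟨z, w⟩ ⟨⟨hzF, hw1⟩, ⟨-, hw2⟩⟩
    simp only [Set.mem_setOf_eq] at hw1 hw2
    obtain ⟨ha1, ha2, ha3⟩ := hw1
    obtain ⟨hb1, hb2, hb3⟩ := hw2
    have hreδ : |w.re| ≤ δ := abs_le.2 ⟨hb1, ha2⟩
    refine ⟨hFV hzF, ⟨⟨lt_of_le_of_lt hreδ hδA, lt_of_le_of_lt ha3 hθB⟩, ?_⟩⟩
    exact hKW ⟨hreδ, by linarith⟩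
  -- U₃ ⊆ U₁ ∩ U₂
  · rintro ⟨z, w⟩ ⟨hzV, ⟨⟨hwre, hwim⟩, hwW⟩⟩
    simp only [Set.mem_setOf_eq] at hwre hwim
    constructor
    · refine ⟨hzV, ?_⟩
      rintro ((⟨t, ht, rfl⟩ | ⟨t, ht, rfl⟩) | ⟨t, ht, rfl⟩)
      · rw [hσbim t, abs_neg, _root_.abs_of_pos hB0] at hwim; linarith
      · rw [hσtim t, _root_.abs_of_pos hB0] at hwim; linarith
      · rw [hσrre t, _root_.abs_of_pos hA0] at hwre; linarith
    · refine ⟨hzV, ?_⟩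
      rintro ((⟨t, ht, rfl⟩ | ⟨t, ht, rfl⟩) | ⟨t, ht, rfl⟩)
      · rw [hσbim t, abs_neg, _root_.abs_of_pos hB0] at hwim; linarith
      · rw [hσtim t, _root_.abs_of_pos hB0] at hwim; linarith
      · rw [hσlre t, abs_neg, _root_.abs_of_pos hA0] at hwre; linarith
  -- U₃ ⊆ U
  · rintro ⟨z, w⟩ ⟨hzV, ⟨-, hwW⟩⟩
    exact hVWU ⟨hzV, hwW⟩
  -- Φ₁ differentiable on U₁
  · have hd1 := paramInt_diff hU hφ hVo σb hσbc 0 A (fun z hz t ht => hVWU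
      ⟨hz, hbW t (habsA t (hsub0A ht))⟩)
    have hd2 := paramInt_diff hU hφ hVo σt hσtc 0 A (fun z hz t ht => hVWU
      ⟨hz, htW t (habsA t (hsub0A ht))⟩)
    have hd3 := paramInt_diff hU hφ hVo σr hσrc (-B) B (fun z hz t ht => hVWU
      ⟨hz, hrW t (habsB t ht)⟩)
    have hmono1 : V ×ˢ Γ₁ᶜ ⊆ V ×ˢ (σb '' Set.uIcc 0 A)ᶜ :=
      Set.prod_mono subset_rfl (compl_subset_compl.2
        (subset_union_left.trans subset_union_left))
    have hmono2 : V ×ˢ Γ₁ᶜ ⊆ V ×ˢ (σt '' Set.uIcc 0 A)ᶜ :=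
      Set.prod_mono subset_rfl (compl_subset_compl.2
        (subset_union_right.trans subset_union_left))
    have hmono3 : V ×ˢ Γ₁ᶜ ⊆ V ×ˢ (σr '' Set.uIcc (-B) B)ᶜ :=
      Set.prod_mono subset_rfl (compl_subset_compl.2 subset_union_right)
    exact (((hd1.mono hmono1).sub (hd2.mono hmono2)).add
      ((hd3.mono hmono3).const_mul I)).const_mul _
  -- Φ₂ differentiable on U₂
  · have hd1 := paramInt_diff hU hφ hVo σt hσtc (-A) 0 (fun z hz t ht => hVWU
      ⟨hz, htW t (habsA t (hsubA0 ht))⟩)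
    have hd2 := paramInt_diff hU hφ hVo σb hσbc (-A) 0 (fun z hz t ht => hVWU
      ⟨hz, hbW t (habsA t (hsubA0 ht))⟩)
    have hd3 := paramInt_diff hU hφ hVo σl hσlc (-B) B (fun z hz t ht => hVWU
      ⟨hz, hlW t (habsB t ht)⟩)
    have hmono1 : V ×ˢ Γ₂ᶜ ⊆ V ×ˢ (σt '' Set.uIcc (-A) 0)ᶜ :=
      Set.prod_mono subset_rfl (compl_subset_compl.2
        (subset_union_right.trans subset_union_left))
    have hmono2 : V ×ˢ Γ₂ᶜ ⊆ V ×ˢ (σb '' Set.uIcc (-A) 0)ᶜ :=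
      Set.prod_mono subset_rfl (compl_subset_compl.2
        (subset_union_left.trans subset_union_left))
    have hmono3 : V ×ˢ Γ₂ᶜ ⊆ V ×ˢ (σl '' Set.uIcc (-B) B)ᶜ :=
      Set.prod_mono subset_rfl (compl_subset_compl.2 subset_union_right)
    exact (((hd1.mono hmono1).sub (hd2.mono hmono2)).add
      ((hd3.mono hmono3).const_mul I)).const_mul _
  -- the equation
  · rintro ⟨z, w⟩ ⟨hzV, ⟨⟨hwre, hwim⟩, hwW⟩⟩
    simp only [Set.mem_setOf_eq] at hwre hwim hwW hzV
    have hfd : DifferentiableOn ℂ (fun ζ => φ (z, ζ)) W := by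
      intro ζ hζ
      exact ((hφ.differentiableAt (hU.mem_nhds (hVWU ⟨hzV, hζ⟩))).comp ζ
        ((differentiableAt_const z).prodMk differentiableAt_id)).differentiableWithinAt
    have hcau := cauchy_rect hWo hfd hrectW hwre hwim
    simp only [smul_eq_mul] at hcau
    -- continuity of the four integrands
    have hcφ : ∀ σ' : ℝ → ℂ, Continuous σ' → (∀ t ∈ Set.uIcc (-A) A, σ' t ∈ W) →
        ContinuousOn (fun x : ℝ => φ (z, σ' x)) (Set.uIcc (-A) A) := by
      intro σ' hc hsub'
      exact (hφ.continuousOn).comp ((continuous_const.prodMk hc).continuousOn)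
        (fun t ht => hVWU ⟨hzV, hsub' t ht⟩)
    have hbne : ∀ t : ℝ, σb t - w ≠ 0 := by
      intro t h
      have h2 : (σb t - w).im = 0 := by rw [h]; simp
      rw [Complex.sub_im, hσbim t] at h2
      have : w.im = -B := by linarith
      rw [this, abs_neg, _root_.abs_of_pos hB0] at hwim
      exact lt_irrefl _ hwim
    have htne : ∀ t : ℝ, σt t - w ≠ 0 := by
      intro t h
      have h2 : (σt t - w).im = 0 := by rw [h]; simp
      rw [Complex.sub_im, hσtim t] at h2
      have : w.im = B := by linarith
      rw [this, _root_.abs_of_pos hB0] at hwim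
      exact lt_irrefl _ hwim
    have hcb : ContinuousOn (fun x : ℝ => φ (z, σb x) * (σb x - w)⁻¹) (Set.uIcc (-A) A) :=
      (hcφ σb hσbc (fun t ht => hbW t (habsA t ht))).mul
        (((hσbc.sub continuous_const).continuousOn).inv₀ (fun t _ => hbne t))
    have hct : ContinuousOn (fun x : ℝ => φ (z, σt x) * (σt x - w)⁻¹) (Set.uIcc (-A) A) :=
      (hcφ σt hσtc (fun t ht => htW t (habsA t ht))).mul
        (((hσtc.sub continuous_const).continuousOn).inv₀ (fun t _ => htne t))
    have hsplitb : (∫ x : ℝ in (-A)..(0:ℝ), φ (z, σb x) * (σb x - w)⁻¹) +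
        (∫ x : ℝ in (0:ℝ)..A, φ (z, σb x) * (σb x - w)⁻¹) =
        ∫ x : ℝ in (-A)..A, φ (z, σb x) * (σb x - w)⁻¹ :=
      intervalIntegral.integral_add_adjacent_intervals
        ((hcb.mono hsubA0).intervalIntegrable) ((hcb.mono hsub0A).intervalIntegrable)
    have hsplitt : (∫ x : ℝ in (-A)..(0:ℝ), φ (z, σt x) * (σt x - w)⁻¹) +
        (∫ x : ℝ in (0:ℝ)..A, φ (z, σt x) * (σt x - w)⁻¹) =
        ∫ x : ℝ in (-A)..A, φ (z, σt x) * (σt x - w)⁻¹ :=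
      intervalIntegral.integral_add_adjacent_intervals
        ((hct.mono hsubA0).intervalIntegrable) ((hct.mono hsub0A).intervalIntegrable)
    have h2πI : (2 * (π:ℂ) * I) ≠ 0 := by
      simp [Real.pi_ne_zero, Complex.I_ne_zero, Complex.ofReal_ne_zero]
    simp only [hΦ₁, hΦ₂, hσb, hσt, hσr, hσl]
    simp only [hσb, hσt, hσr, hσl] at hsplitb hsplitt
    calc (2 * (π:ℂ) * I)⁻¹ *
          ((∫ x : ℝ in (0:ℝ)..A, φ (z, (x:ℂ) + ((-B:ℝ):ℂ) * I) * ((x:ℂ) + ((-B:ℝ):ℂ) * I - w)⁻¹) -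
            (∫ x : ℝ in (0:ℝ)..A, φ (z, (x:ℂ) + ((B:ℝ):ℂ) * I) * ((x:ℂ) + ((B:ℝ):ℂ) * I - w)⁻¹) +
            I * (∫ y : ℝ in (-B)..B, φ (z, ((A:ℝ):ℂ) + (y:ℂ) * I) * (((A:ℝ):ℂ) + (y:ℂ) * I - w)⁻¹)) -
          (2 * (π:ℂ) * I)⁻¹ *
          ((∫ x : ℝ in (-A)..(0:ℝ), φ (z, (x:ℂ) + ((B:ℝ):ℂ) * I) * ((x:ℂ) + ((B:ℝ):ℂ) * I - w)⁻¹) -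
            (∫ x : ℝ in (-A)..(0:ℝ), φ (z, (x:ℂ) + ((-B:ℝ):ℂ) * I) * ((x:ℂ) + ((-B:ℝ):ℂ) * I - w)⁻¹) +
            I * (∫ y : ℝ in (-B)..B, φ (z, ((-A:ℝ):ℂ) + (y:ℂ) * I) * (((-A:ℝ):ℂ) + (y:ℂ) * I - w)⁻¹))
        = (2 * (π:ℂ) * I)⁻¹ *
          ((∫ x : ℝ in (-A)..A, φ (z, (x:ℂ) + ((-B:ℝ):ℂ) * I) * ((x:ℂ) + ((-B:ℝ):ℂ) * I - w)⁻¹) -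
            (∫ x : ℝ in (-A)..A, φ (z, (x:ℂ) + ((B:ℝ):ℂ) * I) * ((x:ℂ) + ((B:ℝ):ℂ) * I - w)⁻¹) +
            I * (∫ y : ℝ in (-B)..B, φ (z, ((A:ℝ):ℂ) + (y:ℂ) * I) * (((A:ℝ):ℂ) + (y:ℂ) * I - w)⁻¹) -
            I * (∫ y : ℝ in (-B)..B, φ (z, ((-A:ℝ):ℂ) + (y:ℂ) * I) * (((-A:ℝ):ℂ) + (y:ℂ) * I - w)⁻¹)) := by
          rw [← hsplitb, ← hsplitt]; ring
      _ = (2 * (π:ℂ) * I)⁻¹ * (2 * (π:ℂ) * I * φ (z, w)) := by rw [hcau]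
      _ = φ (z, w) := by rw [← mul_assoc, inv_mul_cancel₀ h2πI, one_mul]
end
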